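/- arXiv:2008.03076 — 4 statements merged into one kernel-verified Lean document; each statement's English description precedes it below -/
import Mathlib

section
/- Fix a cylinder function h : {0,1}^{ℤ^d} → ℝ. There exists a finite constant C₀ = C₀(h, ρ) such that ∫ | Σ_{x∈T^d_n} J_x ( h(τ_x η) − ~h(ρ) ) | f dν^n_ρ ≤ (1/γ) ( H_n(f) + log 2 ) + C₀ γ n^d ‖J‖²_∞ e^{C₀ γ ‖J‖_∞} for every function J : T^d_n → ℝ, every γ > 0, every density f with respect to ν^n_ρ, and every n large enough that the support of h fits in a cube of side n, where ‖J‖_∞ = max_x |J(x)|. -/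
open Finset

/-- The discrete torus `(ℤ/nℤ)^d`. -/
abbrev Torus (d n : ℕ) := Fin d → ZMod n

/-- Particle configurations on the discrete torus. -/
abbrev Cfg (d n : ℕ) := Torus d n → Bool

/-- Particle configurations on `ℤ^d`. -/
abbrev ZCfg (d : ℕ) := (Fin d → ℤ) → Bool

/-- Real (0/1) value of a configuration at a site. -/
noncomputable def cval {d n : ℕ} (η : Cfg d n) (x : Torus d n) : ℝ :=
  if η x then 1 else 0

/-- Real (0/1) value of a `ℤ^d` configuration at a site. -/
noncomputable def zval {d : ℕ} (η : ZCfg d) (z : Fin d → ℤ) : ℝ :=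
  if η z then 1 else 0

/-- The Bernoulli(ρ) product weight of a configuration. -/
noncomputable def bern (d n : ℕ) [NeZero n] (ρ : ℝ) (η : Cfg d n) : ℝ :=
  ∏ x : Torus d n, (if η x then ρ else 1 - ρ)

/-- Expectation with respect to the Bernoulli(ρ) product measure `ν^n_ρ`. -/
noncomputable def expect (d n : ℕ) [NeZero n] (ρ : ℝ) (f : Cfg d n → ℝ) : ℝ :=
  ∑ η : Cfg d n, bern d n ρ η * f η

/-- A density with respect to `ν^n_ρ`. -/
def IsDensity (d n : ℕ) [NeZero n] (ρ : ℝ) (f : Cfg d n → ℝ) : Prop :=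
  (∀ η, 0 ≤ f η) ∧ expect d n ρ f = 1

/-- Relative entropy `H_n(f) = ∫ f log f dν^n_ρ`. -/
noncomputable def entropy (d n : ℕ) [NeZero n] (ρ : ℝ) (f : Cfg d n → ℝ) : ℝ :=
  expect d n ρ (fun η => f η * Real.log (f η))

/-- Sup norm of a function on the discrete torus. -/
noncomputable def supNorm {d n : ℕ} [NeZero n] (F : Torus d n → ℝ) : ℝ :=
  ⨆ x : Torus d n, |F x|

/-- The canonical unit vector `e_j` of the torus. -/
def unitT (d n : ℕ) (j : Fin d) : Torus d n := fun i => if i = j then 1 else 0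

/-- The canonical unit vector `e_j` of `ℤ^d`. -/
def unitZ (d : ℕ) (j : Fin d) : Fin d → ℤ := fun i => if i = j then 1 else 0

/-- `σ^x η` : flip the value of the configuration at `x`. -/
def flipCfg {d n : ℕ} (x : Torus d n) (η : Cfg d n) : Cfg d n :=
  Function.update η x (!η x)

/-- `σ^{x,y} η` : exchange the values of the configuration at `x` and `y`. -/
def swapCfg {d n : ℕ} (x y : Torus d n) (η : Cfg d n) : Cfg d n :=
  fun z => if z = x then η y else if z = y then η x else η z

/-- `τ_x η` : translation of a torus configuration. -/
def shiftCfg {d n : ℕ} (x : Torus d n) (η : Cfg d n) : Cfg d n := fun z => η (x + z)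

/-- Canonical projection `ℤ^d → (ℤ/nℤ)^d`. -/
def toTorus {d n : ℕ} (z : Fin d → ℤ) : Torus d n := fun i => ((z i : ℤ) : ZMod n)

/-- Periodic identification of a torus configuration with a `ℤ^d` configuration. -/
def liftCfg {d n : ℕ} (η : Cfg d n) : ZCfg d := fun z => η (toTorus z)

/-- `τ_y η` : translation of a `ℤ^d` configuration. -/
def zshift {d : ℕ} (y : Fin d → ℤ) (η : ZCfg d) : ZCfg d := fun z => η (y + z)

/-- flip the value of a `ℤ^d` configuration at `z`. -/
def zflip {d : ℕ} (z : Fin d → ℤ) (η : ZCfg d) : ZCfg d :=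
  Function.update η z (!η z)

/-- A cylinder function on `{0,1}^{ℤ^d}` : a function depending only on the
(finitely many) coordinates in `supp`. -/
structure CylFun (d : ℕ) where
  supp : Finset (Fin d → ℤ)
  toFun : ZCfg d → ℝ
  cyl : ∀ η ζ : ZCfg d, (∀ z ∈ supp, η z = ζ z) → toFun η = toFun ζ

/-- `~h(ρ)` : expectation of a cylinder function under the Bernoulli(ρ) product
measure on `{0,1}^{ℤ^d}` (computed over its support). -/
noncomputable def CylFun.tilde {d : ℕ} (h : CylFun d) (ρ : ℝ) : ℝ :=
  ∑ σ : {z // z ∈ h.supp} → Bool,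
    (∏ z : {z // z ∈ h.supp}, if σ z then ρ else 1 - ρ) *
      h.toFun (fun z => if hz : z ∈ h.supp then σ ⟨z, hz⟩ else false)

/-- `S` is contained in a cube of side `n` (so that periodic identification on the
torus of side `n` is faithful on `S`). -/
def FitsCube (d : ℕ) (S : Finset (Fin d → ℤ)) (n : ℕ) : Prop :=
  ∃ a : Fin d → ℤ, ∀ z ∈ S, ∀ i, a i ≤ z i ∧ z i < a i + (n : ℤ)

/-- `c(τ_x η)` : a cylinder function evaluated on the translate of a torus
configuration, via periodic identification. -/
noncomputable def cylAt {d n : ℕ} (c : CylFun d) (x : Torus d n) (η : Cfg d n) : ℝ :=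
  c.toFun (liftCfg (shiftCfg x η))

/-- The speed-change exclusion generator `L^S_n`. -/
noncomputable def genS (d n : ℕ) [NeZero n] (c : Fin d → CylFun d)
    (h : Cfg d n → ℝ) (η : Cfg d n) : ℝ :=
  ∑ x : Torus d n, ∑ j : Fin d,
    cylAt (c j) x η * (h (swapCfg x (x + unitT d n j) η) - h η)

/-- The voter generator `L^V_n` (the sum over the neighbours `y` of `x` being the
sum over `y = x ± e_j`, `1 ≤ j ≤ d`). -/
noncomputable def genV (d n : ℕ) [NeZero n] (h : Cfg d n → ℝ) (η : Cfg d n) : ℝ :=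
  ∑ x : Torus d n, ∑ j : Fin d,
    ((cval η (x + unitT d n j) - cval η x) ^ 2 * (h (flipCfg x η) - h η)
      + (cval η (x - unitT d n j) - cval η x) ^ 2 * (h (flipCfg x η) - h η))

/-- The adjoint in `L²(ν^n_ρ)` of a linear operator on functions on `Ω_n`. -/
noncomputable def adjoint (d n : ℕ) [NeZero n] (ρ : ℝ)
    (L : (Cfg d n → ℝ) → Cfg d n → ℝ) (g : Cfg d n → ℝ) (η : Cfg d n) : ℝ :=
  (∑ ζ : Cfg d n, bern d n ρ ζ * g ζ * L (fun ξ => if ξ = η then 1 else 0) ζ)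
    / bern d n ρ η

/-- The Dirichlet form `I_n(f)`. -/
noncomputable def dirichlet (d n : ℕ) [NeZero n] (ρ : ℝ) (c : Fin d → CylFun d)
    (f : Cfg d n → ℝ) : ℝ :=
  (1 / 2) * ∑ j : Fin d, ∑ x : Torus d n,
    expect d n ρ (fun η =>
      cylAt (c j) x η *
        (Real.sqrt (f (swapCfg x (x + unitT d n j) η)) - Real.sqrt (f η)) ^ 2)

/-- The sequence `R_d(n)`. -/
noncomputable def Rd (d n : ℕ) (a : ℝ) : ℝ :=
  if d = 1 then Real.sqrt a
  else if d = 2 then a * Real.log (n : ℝ)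
  else a * (n : ℝ) ^ (d - 2)

/-- The sequence `g_d(ℓ)`. -/
noncomputable def gd (d ℓ : ℕ) : ℝ :=
  if d = 1 then (ℓ : ℝ) else if d = 2 then Real.log (ℓ : ℝ) else 1

/-- `ω_x = (η_x - ρ)/√(ρ(1-ρ))`. -/
noncomputable def omega (d n : ℕ) [NeZero n] (ρ : ℝ) (η : Cfg d n) (x : Torus d n) : ℝ :=
  (cval η x - ρ) / Real.sqrt (ρ * (1 - ρ))

/-- `ω_{x+B} = ∏_{z ∈ B} ω_{x+z}`. -/
noncomputable def omegaProd (d n : ℕ) [NeZero n] (ρ : ℝ) (B : Finset (Fin d → ℤ))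
    (η : Cfg d n) (x : Torus d n) : ℝ :=
  ∏ z ∈ B, omega d n ρ η (x + toTorus z)

/-- `V(η) = 2 Σ_j Σ_x ω_x ω_{x+e_j}`. -/
noncomputable def Vfun (d n : ℕ) [NeZero n] (ρ : ℝ) (η : Cfg d n) : ℝ :=
  2 * ∑ j : Fin d, ∑ x : Torus d n, omega d n ρ η x * omega d n ρ η (x + unitT d n j)

/-- The cube `Λ_ℓ = {0,…,ℓ-1}^d ⊂ ℤ^d`. -/
noncomputable def box (d ℓ : ℕ) : Finset (Fin d → ℤ) :=
  Fintype.piFinset fun _ => Finset.Ico (0 : ℤ) (ℓ : ℤ)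

/-- The uniform measure `m_ℓ` on `Λ_ℓ`. -/
noncomputable def mker (d ℓ : ℕ) (z : Fin d → ℤ) : ℝ :=
  if z ∈ box d ℓ then ((ℓ : ℝ) ^ d)⁻¹ else 0

/-- The convolution `m^{(2)}_ℓ = m_ℓ ∗ m_ℓ`. -/
noncomputable def m2ker (d ℓ : ℕ) (z : Fin d → ℤ) : ℝ :=
  ∑ y ∈ box d ℓ, mker d ℓ y * mker d ℓ (z - y)

/-- `ω^ℓ_x = Σ_y m^{(2)}_ℓ(y) ω_{x+y}`. -/
noncomputable def omegaL (d n : ℕ) [NeZero n] (ρ : ℝ) (ℓ : ℕ) (η : Cfg d n)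
    (x : Torus d n) : ℝ :=
  ∑ y ∈ box d (2 * ℓ - 1), m2ker d ℓ y * omega d n ρ η (x + toTorus y)

/-- `V_ℓ(η) = 2 Σ_j Σ_x ω_x ω^ℓ_{x+e_j}`. -/
noncomputable def VfunL (d n : ℕ) [NeZero n] (ρ : ℝ) (ℓ : ℕ) (η : Cfg d n) : ℝ :=
  2 * ∑ j : Fin d, ∑ x : Torus d n, omega d n ρ η x * omegaL d n ρ ℓ η (x + unitT d n j)

/-- The ℓ¹ norm on `ℤ^d`. -/
def norm1 {d : ℕ} (z : Fin d → ℤ) : ℤ := ∑ i, |z i|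

/-- `xA` is a maximal element of `A` for the coordinatewise partial order. -/
def IsMaximalIn {d : ℕ} (A : Finset (Fin d → ℤ)) (xA : Fin d → ℤ) : Prop :=
  xA ∈ A ∧ ∀ y ∈ A, (∀ i, xA i ≤ y i) → y = xA

/-- `H^{(ℓ)}_{k,x}` built from a flow `Φ`. -/
noncomputable def Hflow (d n : ℕ) [NeZero n] (ρ : ℝ) (ℓ : ℕ)
    (Φ : (Fin d → ℤ) → (Fin d → ℤ) → ℝ) (A : Finset (Fin d → ℤ)) (xA : Fin d → ℤ)
    (G : Torus d n → ℝ) (k : Fin d) (x : Torus d n) (η : Cfg d n) : ℝ :=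
  ∑ y ∈ (box d (2 * ℓ - 1)).filter (fun y => y + unitZ d k ∈ box d (2 * ℓ - 1)),
    Φ y (y + unitZ d k) * G (x - toTorus xA - toTorus y) *
      omegaProd d n ρ (A.erase xA) η (x - toTorus xA - toTorus y)

/-! ### Auxiliary machinery for the entropy bound -/

section Aux

variable {d n : ℕ} [NeZero n]

/-- `F` depends only on coordinates in `A`. -/
def DepOn {d n : ℕ} (F : Cfg d n → ℝ) (A : Finset (Torus d n)) : Prop :=
  ∀ η ζ : Cfg d n, (∀ x ∈ A, η x = ζ x) → F η = F ζ

lemma expect_def (ρ : ℝ) (f : Cfg d n → ℝ) :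
    expect d n ρ f = ∑ η : Cfg d n, bern d n ρ η * f η := rfl

lemma sum_bool_weights {ι : Type*} [Fintype ι] [DecidableEq ι] (w : ι → Bool → ℝ) :
    ∑ g : ι → Bool, ∏ i, w i (g i) = ∏ i, (w i true + w i false) := by
  have h1 : (∏ i, ∑ b ∈ (Finset.univ : Finset Bool), w i b)
      = ∑ g ∈ Fintype.piFinset (fun _ : ι => (Finset.univ : Finset Bool)),
          ∏ i, w i (g i) := Finset.prod_univ_sum _ _
  rw [Fintype.piFinset_univ] at h1
  rw [← h1]
  refine Finset.prod_congr rfl fun i _ => ?_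
  simp [add_comm]

lemma bern_nonneg {ρ : ℝ} (h0 : 0 ≤ ρ) (h1 : ρ ≤ 1) (η : Cfg d n) :
    0 ≤ bern d n ρ η :=
  Finset.prod_nonneg fun x _ => by split <;> linarith

lemma sum_bern (ρ : ℝ) : ∑ η : Cfg d n, bern d n ρ η = 1 := by
  have h := sum_bool_weights (ι := Torus d n) (fun _ b => if b then ρ else 1 - ρ)
  have h2 : ρ + (1 - ρ) = 1 := by ring
  simp only [bern]
  simpa [h2] using h

lemma expectR_const (ρ c : ℝ) : expect d n ρ (fun _ : Cfg d n => c) = c := by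
  simp only [expect_def]
  rw [← Finset.sum_mul, sum_bern, one_mul]

lemma expectR_add (ρ : ℝ) (f g : Cfg d n → ℝ) :
    expect d n ρ (fun η => f η + g η) = expect d n ρ f + expect d n ρ g := by
  simp only [expect_def, mul_add, Finset.sum_add_distrib]

lemma expectR_smul (ρ c : ℝ) (f : Cfg d n → ℝ) :
    expect d n ρ (fun η => c * f η) = c * expect d n ρ f := by
  simp only [expect_def, Finset.mul_sum]
  exact Finset.sum_congr rfl fun η _ => by ring

lemma expectR_sum {ι : Type*} (ρ : ℝ) (s : Finset ι) (g : ι → Cfg d n → ℝ) :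
    expect d n ρ (fun η => ∑ i ∈ s, g i η) = ∑ i ∈ s, expect d n ρ (g i) := by
  simp only [expect_def, Finset.mul_sum]
  exact Finset.sum_comm

lemma expectR_mono {ρ : ℝ} (h0 : 0 ≤ ρ) (h1 : ρ ≤ 1) {f g : Cfg d n → ℝ}
    (hfg : ∀ η, f η ≤ g η) : expect d n ρ f ≤ expect d n ρ g :=
  Finset.sum_le_sum fun η _ => mul_le_mul_of_nonneg_left (hfg η) (bern_nonneg h0 h1 η)

lemma expectR_nonneg {ρ : ℝ} (h0 : 0 ≤ ρ) (h1 : ρ ≤ 1) {f : Cfg d n → ℝ}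
    (hf : ∀ η, 0 ≤ f η) : 0 ≤ expect d n ρ f := by
  have h := expectR_mono (d := d) (n := n) h0 h1 (f := fun _ => (0:ℝ)) (g := f) hf
  rwa [expectR_const] at h

lemma expectR_affine (ρ c e : ℝ) (g : Cfg d n → ℝ) :
    expect d n ρ (fun η => c + e * g η) = c + e * expect d n ρ g := by
  have h : ∀ η, bern d n ρ η * (c + e * g η)
      = bern d n ρ η * c + e * (bern d n ρ η * g η) := fun η => by ring
  simp only [expect_def, h, Finset.sum_add_distrib, ← Finset.sum_mul, ← Finset.mul_sum, sum_bern]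
  ring

lemma expect_decompose (ρ : ℝ) (A : Finset (Torus d n)) (H : Cfg d n → ℝ) :
    expect d n ρ H
      = ∑ a : {x : Torus d n // x ∈ A} → Bool, ∑ b : {x : Torus d n // x ∉ A} → Bool,
        ((∏ x : {x : Torus d n // x ∈ A}, if a x then ρ else 1 - ρ) *
         (∏ x : {x : Torus d n // x ∉ A}, if b x then ρ else 1 - ρ)) *
          H (fun x => if hx : x ∈ A then a ⟨x, hx⟩ else b ⟨x, hx⟩) := by
  classical
  set e := Equiv.piEquivPiSubtypeProd (fun x : Torus d n => x ∈ A) (fun _ => Bool) with he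
  have hsum := Equiv.sum_comp e.symm (fun η : Cfg d n => bern d n ρ η * H η)
  rw [expect_def, ← hsum, Fintype.sum_prod_type]
  refine Finset.sum_congr rfl fun a _ => Finset.sum_congr rfl fun b _ => ?_
  have hval : ∀ x : Torus d n, e.symm (a, b) x = if hx : x ∈ A then a ⟨x, hx⟩ else b ⟨x, hx⟩ :=
    fun x => rfl
  have hbern : bern d n ρ (e.symm (a, b))
      = (∏ x : {x : Torus d n // x ∈ A}, if a x then ρ else 1 - ρ) *
        (∏ x : {x : Torus d n // x ∉ A}, if b x then ρ else 1 - ρ) := by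
    rw [bern, ← Fintype.prod_subtype_mul_prod_subtype (fun x : Torus d n => x ∈ A)
      (fun x => if e.symm (a, b) x then ρ else 1 - ρ)]
    congr 1
    · refine Finset.prod_congr ?_ fun x _ => by rw [hval, dif_pos x.2]
      all_goals first
        | rfl
        | exact congrArg (fun i => @Finset.univ _ i) (Subsingleton.elim _ _)
    · refine Finset.prod_congr ?_ fun x _ => by rw [hval, dif_neg x.2]
      all_goals first
        | rfl
        | exact congrArg (fun i => @Finset.univ _ i) (Subsingleton.elim _ _)
  rw [hbern]
  rfl

lemma pattern_sum_one (ρ : ℝ) {α : Type*} [Fintype α] [DecidableEq α] :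
    ∑ a : α → Bool, ∏ x : α, (if a x then ρ else 1 - ρ) = 1 := by
  have h := sum_bool_weights (ι := α) (fun _ c => if c then ρ else 1 - ρ)
  simpa [show ρ + (1 - ρ) = 1 by ring] using h

lemma expect_eq_sum_patterns {ρ : ℝ} {F : Cfg d n → ℝ} {A : Finset (Torus d n)}
    (hF : DepOn F A) :
    expect d n ρ F = ∑ a : {x : Torus d n // x ∈ A} → Bool,
      (∏ x : {x : Torus d n // x ∈ A}, if a x then ρ else 1 - ρ) *
        F (fun x => if hx : x ∈ A then a ⟨x, hx⟩ else false) := by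
  classical
  rw [expect_decompose ρ A F]
  refine Finset.sum_congr rfl fun a _ => ?_
  have hFa : ∀ b : {x : Torus d n // x ∉ A} → Bool,
      F (fun x => if hx : x ∈ A then a ⟨x, hx⟩ else b ⟨x, hx⟩)
        = F (fun x => if hx : x ∈ A then a ⟨x, hx⟩ else false) := fun b =>
    hF _ _ fun x hx => by rw [dif_pos hx, dif_pos hx]
  calc ∑ b : {x : Torus d n // x ∉ A} → Bool,
        ((∏ x : {x : Torus d n // x ∈ A}, if a x then ρ else 1 - ρ) *
         (∏ x : {x : Torus d n // x ∉ A}, if b x then ρ else 1 - ρ)) *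
          F (fun x => if hx : x ∈ A then a ⟨x, hx⟩ else b ⟨x, hx⟩)
      = ∑ b : {x : Torus d n // x ∉ A} → Bool,
          ((∏ x : {x : Torus d n // x ∈ A}, if a x then ρ else 1 - ρ) *
            F (fun x => if hx : x ∈ A then a ⟨x, hx⟩ else false)) *
          (∏ x : {x : Torus d n // x ∉ A}, if b x then ρ else 1 - ρ) :=
        Finset.sum_congr rfl fun b _ => by rw [hFa b]; ring
    _ = _ := by
        rw [← Finset.mul_sum, pattern_sum_one, mul_one]

lemma expect_mul_of_depOn {ρ : ℝ} {F G : Cfg d n → ℝ} {A B : Finset (Torus d n)}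
    (hF : DepOn F A) (hG : DepOn G B) (hAB : Disjoint A B) :
    expect d n ρ (fun η => F η * G η) = expect d n ρ F * expect d n ρ G := by
  classical
  set P : ({x : Torus d n // x ∈ A} → Bool) → ℝ :=
    fun a => ∏ x, if a x then ρ else 1 - ρ with hP
  set Q : ({x : Torus d n // x ∉ A} → Bool) → ℝ :=
    fun b => ∏ x, if b x then ρ else 1 - ρ with hQ
  set Fa : ({x : Torus d n // x ∈ A} → Bool) → ℝ :=
    fun a => F (fun x => if hx : x ∈ A then a ⟨x, hx⟩ else false) with hFadef
  set Gb : ({x : Torus d n // x ∉ A} → Bool) → ℝ :=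
    fun b => G (fun x => if hx : x ∈ A then false else b ⟨x, hx⟩) with hGbdef
  have hP1 : ∑ a, P a = 1 := pattern_sum_one ρ
  have hQ1 : ∑ b, Q b = 1 := pattern_sum_one ρ
  have hFval : ∀ (a : {x : Torus d n // x ∈ A} → Bool) (b : {x : Torus d n // x ∉ A} → Bool),
      F (fun x => if hx : x ∈ A then a ⟨x, hx⟩ else b ⟨x, hx⟩) = Fa a := fun a b =>
    hF _ _ fun x hx => by rw [dif_pos hx, dif_pos hx]
  have hGval : ∀ (a : {x : Torus d n // x ∈ A} → Bool) (b : {x : Torus d n // x ∉ A} → Bool),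
      G (fun x => if hx : x ∈ A then a ⟨x, hx⟩ else b ⟨x, hx⟩) = Gb b := by
    intro a b
    refine hG _ _ fun x hx => ?_
    have hxA : x ∉ A := fun hc => Finset.disjoint_left.mp hAB hc hx
    rw [dif_neg hxA, dif_neg hxA]
  have e1 : expect d n ρ (fun η => F η * G η)
      = ∑ a, ∑ b, (P a * Fa a) * (Q b * Gb b) := by
    rw [expect_decompose ρ A (fun η => F η * G η)]
    refine Finset.sum_congr rfl fun a _ => Finset.sum_congr rfl fun b _ => ?_
    rw [hFval a b, hGval a b]
    ring
  have e2 : expect d n ρ F = ∑ a, P a * Fa a := by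
    rw [expect_decompose ρ A F]
    refine Finset.sum_congr rfl fun a _ => ?_
    calc ∑ b, (P a * Q b) * F (fun x => if hx : x ∈ A then a ⟨x, hx⟩ else b ⟨x, hx⟩)
        = ∑ b, (P a * Fa a) * Q b :=
          Finset.sum_congr rfl fun b _ => by rw [hFval a b]; ring
      _ = P a * Fa a := by rw [← Finset.mul_sum, hQ1, mul_one]
  have e3 : expect d n ρ G = ∑ b, Q b * Gb b := by
    rw [expect_decompose ρ A G, Finset.sum_comm]
    refine Finset.sum_congr rfl fun b _ => ?_
    calc ∑ a, (P a * Q b) * G (fun x => if hx : x ∈ A then a ⟨x, hx⟩ else b ⟨x, hx⟩)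
        = ∑ a, (Q b * Gb b) * P a :=
          Finset.sum_congr rfl fun a _ => by rw [hGval a b]; ring
      _ = Q b * Gb b := by rw [← Finset.mul_sum, hP1, mul_one]
  rw [e1, e2, e3, Finset.sum_mul_sum]

lemma expect_prod_of_depOn {ι : Type*} [DecidableEq ι] {ρ : ℝ} (s : Finset ι)
    (F : ι → Cfg d n → ℝ) (A : ι → Finset (Torus d n))
    (hdep : ∀ i ∈ s, DepOn (F i) (A i))
    (hdisj : ∀ i ∈ s, ∀ j ∈ s, i ≠ j → Disjoint (A i) (A j)) :
    expect d n ρ (fun η => ∏ i ∈ s, F i η) = ∏ i ∈ s, expect d n ρ (F i) := by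
  classical
  induction s using Finset.induction_on with
  | empty => simpa using expectR_const (d := d) (n := n) ρ 1
  | @insert a s ha ih =>
    have hdepa : DepOn (F a) (A a) := hdep a (Finset.mem_insert_self a s)
    have hdeps : DepOn (fun η => ∏ i ∈ s, F i η) (s.biUnion A) := by
      intro η ζ hagree
      exact Finset.prod_congr rfl fun i hi =>
        hdep i (Finset.mem_insert_of_mem hi) η ζ fun x hx =>
          hagree x (Finset.mem_biUnion.mpr ⟨i, hi, hx⟩)
    have hdisja : Disjoint (A a) (s.biUnion A) := by
      rw [Finset.disjoint_biUnion_right]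
      intro i hi
      exact hdisj a (Finset.mem_insert_self a s) i (Finset.mem_insert_of_mem hi)
        (fun hh => ha (hh ▸ hi))
    have hmul := expect_mul_of_depOn (ρ := ρ) hdepa hdeps hdisja
    calc expect d n ρ (fun η => ∏ i ∈ insert a s, F i η)
        = expect d n ρ (fun η => F a η * ∏ i ∈ s, F i η) :=
          congrArg _ (funext fun η => Finset.prod_insert ha)
      _ = expect d n ρ (F a) * expect d n ρ (fun η => ∏ i ∈ s, F i η) := hmul
      _ = expect d n ρ (F a) * ∏ i ∈ s, expect d n ρ (F i) := by
          rw [ih (fun i hi => hdep i (Finset.mem_insert_of_mem hi))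
            (fun i hi j hj hij => hdisj i (Finset.mem_insert_of_mem hi) j
              (Finset.mem_insert_of_mem hj) hij)]
      _ = ∏ i ∈ insert a s, expect d n ρ (F i) :=
          (Finset.prod_insert (f := fun i => expect d n ρ (F i)) ha).symm

lemma toTorus_injOn_of_fits {S : Finset (Fin d → ℤ)} (hfit : FitsCube d S n) :
    ∀ z ∈ S, ∀ z' ∈ S, toTorus (n := n) z = toTorus z' → z = z' := by
  obtain ⟨a, ha⟩ := hfit
  intro z hz z' hz' hzz
  funext i
  have h1 := ha z hz i
  have h2 := ha z' hz' i
  have hcoord : ((z i : ℤ) : ZMod n) = ((z' i : ℤ) : ZMod n) := congrFun hzz i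
  have hdvd : (n : ℤ) ∣ z' i - z i :=
    Int.ModEq.dvd ((ZMod.intCast_eq_intCast_iff _ _ _).mp hcoord)
  obtain ⟨k, hk⟩ := hdvd
  have hn : (0:ℤ) < (n:ℤ) := by exact_mod_cast Nat.pos_of_ne_zero (NeZero.ne n)
  have hb1 : -(n:ℤ) < (n:ℤ) * k := by rw [← hk]; omega
  have hb2 : (n:ℤ) * k < n := by rw [← hk]; omega
  have hk0 : k = 0 := by
    rcases lt_trichotomy k 0 with hlt | heq | hgt
    · have : (n:ℤ) * k ≤ (n:ℤ) * (-1) := by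
        apply mul_le_mul_of_nonneg_left (by omega) hn.le
      omega
    · exact heq
    · have : (n:ℤ) * 1 ≤ (n:ℤ) * k := mul_le_mul_of_nonneg_left (by omega) hn.le
      omega
  rw [hk0, mul_zero] at hk
  omega

lemma cylAt_depOn (h : CylFun d) (x : Torus d n) :
    DepOn (fun η => cylAt h x η) (h.supp.image (fun z => x + toTorus z)) := by
  intro η ζ hagree
  exact h.cyl _ _ fun z hz => hagree (x + toTorus z) (Finset.mem_image_of_mem _ hz)

lemma expect_cylAt {ρ : ℝ} (h : CylFun d) (hfit : FitsCube d h.supp n) (x : Torus d n) :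
    expect d n ρ (fun η => cylAt h x η) = h.tilde ρ := by
  classical
  set A : Finset (Torus d n) := h.supp.image (fun z => x + toTorus z) with hA
  rw [expect_eq_sum_patterns (cylAt_depOn h x), CylFun.tilde]
  have hinj := toTorus_injOn_of_fits (n := n) hfit
  have hmap : ∀ z : {z // z ∈ h.supp}, x + toTorus z.1 ∈ A :=
    fun z => Finset.mem_image_of_mem _ z.2
  set κ : {z // z ∈ h.supp} → {y : Torus d n // y ∈ A} := fun z => ⟨x + toTorus z.1, hmap z⟩
    with hκ
  have hκbij : Function.Bijective κ := by
    constructor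
    · intro z z' hzz
      have h1 : x + toTorus (n := n) z.1 = x + toTorus z'.1 := congrArg Subtype.val hzz
      exact Subtype.ext (hinj _ z.2 _ z'.2 (add_left_cancel h1))
    · rintro ⟨y, hy⟩
      obtain ⟨z, hz, rfl⟩ := Finset.mem_image.mp hy
      exact ⟨⟨z, hz⟩, rfl⟩
  set κe := Equiv.ofBijective κ hκbij with hκe
  refine Fintype.sum_equiv (Equiv.arrowCongr κe (Equiv.refl Bool)).symm _ _ fun a => ?_
  have harr : ∀ z : {z // z ∈ h.supp},
      ((Equiv.arrowCongr κe (Equiv.refl Bool)).symm a) z = a (κe z) := fun z => rfl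
  congr 1
  · -- weights agree
    rw [← Equiv.prod_comp κe (fun y => if a y then ρ else 1 - ρ)]
    exact Finset.prod_congr rfl fun z _ => by rw [harr]
  · -- values agree
    show cylAt h x (fun y => if hy : y ∈ A then a ⟨y, hy⟩ else false) = _
    refine h.cyl _ _ fun z hz => ?_
    have hmem : x + toTorus z ∈ A := Finset.mem_image_of_mem _ hz
    have hlift : liftCfg (shiftCfg x (fun y => if hy : y ∈ A then a ⟨y, hy⟩ else false)) z
        = a ⟨x + toTorus z, hmem⟩ := by
      show (if hy : x + toTorus z ∈ A then a ⟨x + toTorus z, hy⟩ else false) = _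
      rw [dif_pos hmem]
    rw [hlift, dif_pos hz, harr ⟨z, hz⟩]
    rfl

/-- Elementary inequality `e^u ≤ 1 + u + u² e^{|u|}`. -/
lemma exp_le_one_add_sq (u : ℝ) : Real.exp u ≤ 1 + u + u ^ 2 * Real.exp |u| := by
  rcases le_or_gt 0 u with hu | hu
  · rw [abs_of_nonneg hu]
    have h1 : 1 - u ≤ Real.exp (-u) := by linarith [Real.add_one_le_exp (-u)]
    have h2 : (1 - u) * Real.exp u ≤ 1 := by
      have h3 := mul_le_mul_of_nonneg_right h1 (Real.exp_pos u).le
      rwa [← Real.exp_add, neg_add_cancel, Real.exp_zero] at h3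
    nlinarith [Real.exp_pos u]
  · rw [abs_of_neg hu]
    have h1 : 1 - u ≤ Real.exp (-u) := by linarith [Real.add_one_le_exp (-u)]
    have h2 : (1 - u) * Real.exp u ≤ 1 := by
      have h3 := mul_le_mul_of_nonneg_right h1 (Real.exp_pos u).le
      rwa [← Real.exp_add, neg_add_cancel, Real.exp_zero] at h3
    have h3 : (1:ℝ) ≤ Real.exp (-u) := by
      rw [← Real.exp_zero]
      exact Real.exp_le_exp.mpr (by linarith)
    have hpos : (0:ℝ) < 1 - u := by linarith
    have hsq : 0 < u ^ 2 := by nlinarith [mul_pos (neg_pos.mpr hu) (neg_pos.mpr hu)]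
    have hcube : u ^ 3 < 0 := by nlinarith
    have h5 : Real.exp u ≤ 1 + u + u ^ 2 := by nlinarith [Real.exp_pos u]
    nlinarith

/-- Variational inequality `u v ≤ u log u - u + e^v` for `u ≥ 0`. -/
lemma mul_le_entropy_term {u : ℝ} (hu : 0 ≤ u) (v : ℝ) :
    u * v ≤ u * Real.log u - u + Real.exp v := by
  rcases eq_or_lt_of_le hu with h0 | h0
  · rw [← h0]
    simpa using (Real.exp_pos v).le
  · have h1 : (v - Real.log u) + 1 ≤ Real.exp (v - Real.log u) := by
      linarith [Real.add_one_le_exp (v - Real.log u)]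
    have h2 : Real.exp (v - Real.log u) = Real.exp v / u := by
      rw [Real.exp_sub, Real.exp_log h0]
    rw [h2] at h1
    have h3 := mul_le_mul_of_nonneg_left h1 h0.le
    have h4 : u * (Real.exp v / u) = Real.exp v := by field_simp
    nlinarith [h3, h4]

/-- One-dimensional coloring of `ZMod n` separating small differences. -/
lemma exists_coloring (n : ℕ) [NeZero n] (D : ℕ) :
    ∃ f : ZMod n → Fin (2 * (D + 1)), ∀ a b : ZMod n, f a = f b →
      ∀ δ : ℤ, δ.natAbs ≤ D → (a - b : ZMod n) = (δ : ZMod n) → a = b := by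
  have hn0 : 0 < n := Nat.pos_of_ne_zero (NeZero.ne n)
  set R := D + 1 with hR
  have hR0 : 0 < R := Nat.succ_pos D
  rcases le_or_gt n (2 * R) with hn | hn
  · refine ⟨fun a => ⟨a.val, lt_of_lt_of_le (ZMod.val_lt a) hn⟩, ?_⟩
    intro a b hf δ _ _
    apply ZMod.val_injective n
    have := congrArg Fin.val hf
    simpa using this
  · set q := R * (n / R) with hq
    have hmod : n % R < R := Nat.mod_lt _ hR0
    have hnq : q + n % R = n := Nat.div_add_mod n R
    refine ⟨fun a => if _ : a.val < q then
        ⟨a.val % R, by have := Nat.mod_lt a.val hR0; omega⟩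
      else ⟨R + (a.val - q), by have hv := ZMod.val_lt a; omega⟩, ?_⟩
    intro a b hf δ hδ heq
    simp only [] at hf
    have hva := ZMod.val_lt a
    have hvb := ZMod.val_lt b
    have hRpos : (0:ℤ) < (R:ℤ) := by exact_mod_cast hR0
    have hnpos : (0:ℤ) < (n:ℤ) := by exact_mod_cast hn0
    have hcast : (((a.val : ℤ) - (b.val : ℤ) - δ : ℤ) : ZMod n) = 0 := by
      push_cast
      rw [ZMod.natCast_rightInverse a, ZMod.natCast_rightInverse b, heq]
      ring
    have hdvd : (n : ℤ) ∣ ((a.val : ℤ) - (b.val : ℤ) - δ) :=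
      (ZMod.intCast_zmod_eq_zero_iff_dvd _ n).mp hcast
    obtain ⟨k, hk⟩ := hdvd
    have hδ' : |δ| ≤ (D : ℤ) := by
      rw [Int.abs_eq_natAbs]
      exact_mod_cast hδ
    obtain ⟨hδl, hδu⟩ := abs_le.mp hδ'
    have hDR : (D:ℤ) < (R:ℤ) := by exact_mod_cast (by omega : D < R)
    have hva' : ((a.val : ℕ) : ℤ) < (n:ℤ) := by exact_mod_cast hva
    have hvb' : ((b.val : ℕ) : ℤ) < (n:ℤ) := by exact_mod_cast hvb
    have hva0 : (0:ℤ) ≤ ((a.val : ℕ) : ℤ) := Int.natCast_nonneg _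
    have hvb0 : (0:ℤ) ≤ ((b.val : ℕ) : ℤ) := Int.natCast_nonneg _
    have hRn : (R:ℤ) ≤ (n:ℤ) := by exact_mod_cast (by omega : R ≤ n)
    have hkrange : k = 0 ∨ k = 1 ∨ k = -1 := by
      have hb1 : (n:ℤ) * k < 2 * n := by rw [← hk]; linarith
      have hb2 : -(2 * (n:ℤ)) < (n:ℤ) * k := by rw [← hk]; linarith
      have hk2 : k < 2 := by
        by_contra hcon
        have : (n:ℤ) * 2 ≤ (n:ℤ) * k := mul_le_mul_of_nonneg_left (by omega) hnpos.le
        linarith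
      have hkm2 : -2 < k := by
        by_contra hcon
        have : (n:ℤ) * k ≤ (n:ℤ) * (-2) := mul_le_mul_of_nonneg_left (by omega) hnpos.le
        linarith
      omega
    by_cases ha : a.val < q <;> by_cases hb : b.val < q
    · -- both in the first branch
      rw [dif_pos ha, dif_pos hb] at hf
      have hmm : a.val % R = b.val % R := by
        have := congrArg Fin.val hf
        simpa using this
      have hRd : (R:ℤ) ∣ ((a.val : ℤ) - (b.val : ℤ)) := by
        have e1 := Nat.div_add_mod a.val R
        have e2 := Nat.div_add_mod b.val R
        refine ⟨(a.val / R : ℕ) - (b.val / R : ℕ), ?_⟩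
        have e1' : (a.val : ℤ) = (R:ℤ) * ((a.val / R : ℕ) : ℤ) + ((a.val % R : ℕ) : ℤ) := by
          exact_mod_cast e1.symm
        have e2' : (b.val : ℤ) = (R:ℤ) * ((b.val / R : ℕ) : ℤ) + ((b.val % R : ℕ) : ℤ) := by
          exact_mod_cast e2.symm
        have hmm' : ((a.val % R : ℕ) : ℤ) = ((b.val % R : ℕ) : ℤ) := by exact_mod_cast hmm
        rw [e1', e2', hmm']
        ring
      obtain ⟨c, hc⟩ := hRd
      have hqR : (q:ℤ) = (R:ℤ) * ((n / R : ℕ) : ℤ) := by exact_mod_cast hq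
      have haq : ((a.val : ℕ) : ℤ) < (q:ℤ) := by exact_mod_cast ha
      have hbq : ((b.val : ℕ) : ℤ) < (q:ℤ) := by exact_mod_cast hb
      rcases hkrange with hk0 | hk1 | hkm
      · -- k = 0 : the difference is δ itself, small and divisible by R, hence zero
        rw [hk0, mul_zero] at hk
        have hΔδ : (a.val : ℤ) - (b.val : ℤ) = δ := by linarith
        have hc0 : c = 0 := by
          by_contra hne
          have h1 : (1:ℤ) ≤ |c| := Int.one_le_abs hne
          have h2 : (R:ℤ) * 1 ≤ (R:ℤ) * |c| := mul_le_mul_of_nonneg_left h1 hRpos.le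
          have habs : |(a.val : ℤ) - (b.val : ℤ)| = (R:ℤ) * |c| := by
            rw [hc, abs_mul, abs_of_nonneg hRpos.le]
          have hsmall : |(a.val : ℤ) - (b.val : ℤ)| ≤ (D:ℤ) := by
            rw [hΔδ]
            exact hδ'
          linarith
        rw [hc0, mul_zero] at hc
        apply ZMod.val_injective n
        have : ((a.val : ℕ) : ℤ) = ((b.val : ℕ) : ℤ) := by linarith
        exact_mod_cast this
      · -- k = 1 : impossible
        exfalso
        rw [hk1, mul_one] at hk
        have hΔ : (a.val : ℤ) - (b.val : ℤ) = (n:ℤ) + δ := by linarith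
        have hub : (R:ℤ) * c ≤ (q:ℤ) - 1 := by rw [← hc]; linarith
        have hclt : c < ((n / R : ℕ) : ℤ) := by
          refine lt_of_mul_lt_mul_left ?_ hRpos.le
          calc (R:ℤ) * c ≤ (q:ℤ) - 1 := hub
            _ < (q:ℤ) := by linarith
            _ = (R:ℤ) * ((n / R : ℕ) : ℤ) := hqR
        have hc1 : c ≤ ((n / R : ℕ) : ℤ) - 1 := by linarith
        have h3 : (R:ℤ) * c ≤ (R:ℤ) * (((n / R : ℕ) : ℤ) - 1) :=
          mul_le_mul_of_nonneg_left hc1 hRpos.le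
        have h4 : (R:ℤ) * (((n / R : ℕ) : ℤ) - 1) = (q:ℤ) - R := by rw [hqR]; ring
        have hqn : (q:ℤ) ≤ (n:ℤ) := by exact_mod_cast (by omega : q ≤ n)
        have hfin : (a.val : ℤ) - (b.val : ℤ) ≤ (n:ℤ) - R := by
          rw [hc]; linarith
        linarith
      · -- k = -1 : impossible
        exfalso
        rw [hkm] at hk
        have hΔ : (a.val : ℤ) - (b.val : ℤ) = -(n:ℤ) + δ := by linarith
        have hub : (R:ℤ) * (-c) ≤ (q:ℤ) - 1 := by
          have : -((a.val : ℤ) - (b.val : ℤ)) = (R:ℤ) * (-c) := by rw [hc]; ring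
          linarith
        have hclt : -c < ((n / R : ℕ) : ℤ) := by
          refine lt_of_mul_lt_mul_left ?_ hRpos.le
          calc (R:ℤ) * (-c) ≤ (q:ℤ) - 1 := hub
            _ < (q:ℤ) := by linarith
            _ = (R:ℤ) * ((n / R : ℕ) : ℤ) := hqR
        have hc1 : -c ≤ ((n / R : ℕ) : ℤ) - 1 := by linarith
        have h3 : (R:ℤ) * (-c) ≤ (R:ℤ) * (((n / R : ℕ) : ℤ) - 1) :=
          mul_le_mul_of_nonneg_left hc1 hRpos.le
        have h4 : (R:ℤ) * (((n / R : ℕ) : ℤ) - 1) = (q:ℤ) - R := by rw [hqR]; ring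
        have hqn : (q:ℤ) ≤ (n:ℤ) := by exact_mod_cast (by omega : q ≤ n)
        have hfin : -((a.val : ℤ) - (b.val : ℤ)) ≤ (n:ℤ) - R := by
          have : -((a.val : ℤ) - (b.val : ℤ)) = (R:ℤ) * (-c) := by rw [hc]; ring
          linarith
        linarith
    · -- mixed branches: impossible
      exfalso
      rw [dif_pos ha, dif_neg hb] at hf
      have := congrArg Fin.val hf
      simp only [] at this
      have hm := Nat.mod_lt a.val hR0
      omega
    · exfalso
      rw [dif_neg ha, dif_pos hb] at hf
      have := congrArg Fin.val hf
      simp only [] at this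
      have hm := Nat.mod_lt b.val hR0
      omega
    · -- both in the second branch
      rw [dif_neg ha, dif_neg hb] at hf
      have := congrArg Fin.val hf
      simp only [] at this
      apply ZMod.val_injective n
      omega

end Aux

set_option maxHeartbeats 1600000

/-- entropy-inequality bound (Lemma l35):
`∫ |Σ_x J_x (h(τ_x η) - ~h(ρ))| f dν ≤ (1/γ)(H_n(f) + log 2)
  + C₀ γ n^d ‖J‖²_∞ e^{C₀ γ ‖J‖_∞}`, with `C₀ = C₀(h, ρ)`. -/
theorem cylinder_field_entropy_bound :
    ∀ d : ℕ, 1 ≤ d → ∀ h : CylFun d, ∀ ρ : ℝ, 0 < ρ → ρ < 1 →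
    ∃ C₀ : ℝ, ∀ (n : ℕ) [NeZero n], FitsCube d h.supp n →
      ∀ J : Torus d n → ℝ, ∀ γ : ℝ, 0 < γ →
      ∀ f : Cfg d n → ℝ, IsDensity d n ρ f →
        expect d n ρ (fun η =>
          |∑ x : Torus d n, J x * (cylAt h x η - h.tilde ρ)| * f η)
          ≤ (1 / γ) * (entropy d n ρ f + Real.log 2)
            + C₀ * γ * (n : ℝ) ^ d * supNorm J ^ 2
              * Real.exp (C₀ * γ * supNorm J) := by
  intro d _hd h ρ hρ0 hρ1
  classical
  have hρ0' : (0:ℝ) ≤ ρ := hρ0.le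
  have hρ1' : ρ ≤ 1 := hρ1.le
  -- a uniform bound on the cylinder function
  set pat : ({z // z ∈ h.supp} → Bool) → ZCfg d :=
    fun σ z => if hz : z ∈ h.supp then σ ⟨z, hz⟩ else false with hpat
  have hne : (Finset.univ : Finset ({z // z ∈ h.supp} → Bool)).Nonempty :=
    Finset.univ_nonempty
  set M : ℝ := Finset.univ.sup' hne (fun σ => |h.toFun (pat σ)|) with hM
  have hMb : ∀ ζ : ZCfg d, |h.toFun ζ| ≤ M := by
    intro ζ
    have hrw : h.toFun ζ = h.toFun (pat (fun z => ζ z.1)) := by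
      refine h.cyl _ _ fun z hz => ?_
      simp only [hpat, dif_pos hz]
    rw [hrw]
    exact Finset.le_sup' (fun σ => |h.toFun (pat σ)|)
      (Finset.mem_univ (fun z : {z // z ∈ h.supp} => ζ z.1))
  have hM0 : 0 ≤ M := le_trans (abs_nonneg _) (hMb fun _ => false)
  have htildeb : |h.tilde ρ| ≤ M := by
    rw [CylFun.tilde]
    calc |∑ σ : {z // z ∈ h.supp} → Bool,
          (∏ z : {z // z ∈ h.supp}, if σ z then ρ else 1 - ρ) *
            h.toFun (fun z => if hz : z ∈ h.supp then σ ⟨z, hz⟩ else false)|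
        ≤ ∑ σ : {z // z ∈ h.supp} → Bool,
          |(∏ z : {z // z ∈ h.supp}, if σ z then ρ else 1 - ρ) *
            h.toFun (fun z => if hz : z ∈ h.supp then σ ⟨z, hz⟩ else false)| :=
          Finset.abs_sum_le_sum_abs _ _
      _ ≤ ∑ σ : {z // z ∈ h.supp} → Bool,
          (∏ z : {z // z ∈ h.supp}, if σ z then ρ else 1 - ρ) * M := by
          refine Finset.sum_le_sum fun σ _ => ?_
          have hw0 : 0 ≤ ∏ z : {z // z ∈ h.supp}, (if σ z then ρ else 1 - ρ) :=
            Finset.prod_nonneg fun z _ => by split <;> linarith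
          rw [abs_mul, abs_of_nonneg hw0]
          exact mul_le_mul_of_nonneg_left (hMb _) hw0
      _ = M := by rw [← Finset.sum_mul, pattern_sum_one, one_mul]
  set K : ℝ := 2 * M with hKdef
  have hK0 : 0 ≤ K := by rw [hKdef]; linarith
  -- combinatorial data depending only on `h`
  set D : ℕ := (h.supp ×ˢ h.supp).sup
    (fun p => Finset.univ.sup fun i => (p.1 i - p.2 i).natAbs) with hD
  set m : ℕ := 2 * (D + 1) with hm
  set pN : ℕ := Fintype.card (Fin d → Fin m) with hpN
  have hpN1 : 1 ≤ pN := Fintype.card_pos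
  have hpNR : (1:ℝ) ≤ (pN:ℝ) := by exact_mod_cast hpN1
  have hpNpos : (0:ℝ) < (pN:ℝ) := by linarith
  have hpNinv0 : (0:ℝ) ≤ ((pN:ℝ))⁻¹ := inv_nonneg.mpr hpNpos.le
  set C₀ : ℝ := (pN:ℝ)^2 * K^2 + (pN:ℝ) * K + 1 with hC₀
  have hC₀1 : (pN:ℝ)^2 * K^2 ≤ C₀ := by
    rw [hC₀]
    nlinarith [mul_nonneg (hpNpos.le) hK0]
  have hC₀2 : (pN:ℝ) * K ≤ C₀ := by
    rw [hC₀]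
    nlinarith [mul_nonneg (mul_nonneg hpNpos.le hpNpos.le) (mul_nonneg hK0 hK0)]
  have hC₀0 : 0 ≤ C₀ := by
    have := mul_nonneg hpNpos.le hK0
    linarith [hC₀2]
  refine ⟨C₀, ?_⟩
  intro n _inst hfit J γ hγ f hf
  -- sup norm facts
  have hJx : ∀ x : Torus d n, |J x| ≤ supNorm J := by
    intro x
    show |J x| ≤ ⨆ y : Torus d n, |J y|
    exact le_ciSup (Set.Finite.bddAbove (Set.finite_range fun y : Torus d n => |J y|)) x
  set Jm : ℝ := supNorm J with hJm
  have hJm0 : 0 ≤ Jm := le_trans (abs_nonneg _) (hJx (Classical.arbitrary _))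
  -- the centred cylinder field
  set Y : Torus d n → Cfg d n → ℝ := fun x η => cylAt h x η - h.tilde ρ with hY
  set A : Torus d n → Finset (Torus d n) :=
    fun x => h.supp.image (fun z => x + toTorus z) with hA
  have hYdep : ∀ x, DepOn (Y x) (A x) := by
    intro x η ζ hagree
    have := cylAt_depOn h x η ζ hagree
    simp only [hY, this]
  have hYb : ∀ x η, |Y x η| ≤ K := by
    intro x η
    have h1 : |cylAt h x η| ≤ M := hMb _
    have h2 := htildeb
    calc |Y x η| = |cylAt h x η - h.tilde ρ| := rfl
      _ ≤ |cylAt h x η| + |h.tilde ρ| := abs_sub _ _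
      _ ≤ K := by rw [hKdef]; linarith
  have hYmean : ∀ x, expect d n ρ (Y x) = 0 := by
    intro x
    have h1 : expect d n ρ (fun η => cylAt h x η) = h.tilde ρ := expect_cylAt h hfit x
    have h2 : expect d n ρ (Y x)
        = expect d n ρ (fun η => cylAt h x η) + expect d n ρ (fun _ => -h.tilde ρ) := by
      rw [← expectR_add]
      refine congrArg _ (funext fun η => ?_)
      simp [hY, sub_eq_add_neg]
    rw [h2, h1, expectR_const]
    ring
  -- coloring
  obtain ⟨fc, hfc⟩ := exists_coloring n D
  set col : Torus d n → (Fin d → Fin m) := fun x i => fc (x i) with hcol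
  have hDle : ∀ z ∈ h.supp, ∀ z' ∈ h.supp, ∀ i : Fin d, (z i - z' i).natAbs ≤ D := by
    intro z hz z' hz' i
    have h1 : (z i - z' i).natAbs
        ≤ Finset.univ.sup (fun j : Fin d => (z j - z' j).natAbs) :=
      Finset.le_sup (f := fun j : Fin d => (z j - z' j).natAbs) (Finset.mem_univ i)
    have hmem : (z, z') ∈ h.supp ×ˢ h.supp := Finset.mem_product.mpr ⟨hz, hz'⟩
    have h2 : Finset.univ.sup (fun j : Fin d => (z j - z' j).natAbs) ≤ D :=
      Finset.le_sup (f := fun p : (Fin d → ℤ) × (Fin d → ℤ) =>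
        Finset.univ.sup fun i => (p.1 i - p.2 i).natAbs) hmem
    exact le_trans h1 h2
  have hdisj : ∀ x y : Torus d n, col x = col y → x ≠ y → Disjoint (A x) (A y) := by
    intro x y hcxy hxy
    rw [Finset.disjoint_left]
    rintro t htx hty
    obtain ⟨z, hz, hzt⟩ := Finset.mem_image.mp htx
    obtain ⟨z', hz', hzt'⟩ := Finset.mem_image.mp hty
    apply hxy
    funext i
    have hfeq : fc (x i) = fc (y i) := congrFun hcxy i
    have heqt : x + toTorus z = y + toTorus z' := hzt.trans hzt'.symm
    have heqi : x i - y i = ((z' i - z i : ℤ) : ZMod n) := by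
      have h3 : x i + ((z i : ℤ) : ZMod n) = y i + ((z' i : ℤ) : ZMod n) := by
        have h4 := congrFun heqt i
        simpa [toTorus] using h4
      push_cast
      linear_combination h3
    exact hfc (x i) (y i) hfeq (z' i - z i) (hDle z' hz' z hz i) heqi
  -- cardinality of the torus
  have hcard : ((Fintype.card (Torus d n) : ℕ) : ℝ) = (n:ℝ)^d := by
    rw [Fintype.card_fun, ZMod.card, Fintype.card_fin]
    push_cast
    ring
  have hnd0 : (0:ℝ) ≤ (n:ℝ)^d := by positivity
  -- the exponential moment bound
  have hpNγ0 : (0:ℝ) ≤ (pN:ℝ) * γ := mul_nonneg hpNpos.le hγ.le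
  have hquad0 : (0:ℝ) ≤ (pN:ℝ)^2 * γ^2 * Jm^2 * K^2 :=
    mul_nonneg (mul_nonneg (mul_nonneg (sq_nonneg _) (sq_nonneg _)) (sq_nonneg _)) (sq_nonneg _)
  set bnd : ℝ := (pN:ℝ)^2 * γ^2 * Jm^2 * K^2 * Real.exp ((pN:ℝ) * γ * Jm * K) with hbnd
  have hbnd0 : 0 ≤ bnd := by
    rw [hbnd]
    exact mul_nonneg hquad0 (Real.exp_pos _).le
  set B : ℝ := (n:ℝ)^d * bnd with hB
  have hB0 : 0 ≤ B := mul_nonneg hnd0 hbnd0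
  have hkey : ∀ J' : Torus d n → ℝ, (∀ x, |J' x| ≤ Jm) →
      expect d n ρ (fun η => Real.exp (γ * ∑ x : Torus d n, J' x * Y x η))
        ≤ Real.exp B := by
    intro J' hJ'
    -- single-site exponential moment
    have hsite : ∀ x : Torus d n,
        expect d n ρ (fun η => Real.exp ((pN:ℝ) * γ * (J' x * Y x η)))
          ≤ Real.exp bnd := by
      intro x
      have hpt : ∀ η, Real.exp ((pN:ℝ) * γ * (J' x * Y x η))
          ≤ (1 + bnd) + ((pN:ℝ) * γ * J' x) * Y x η := by
        intro η
        refine le_trans (exp_le_one_add_sq _) ?_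
        have h1 : |(pN:ℝ) * γ * (J' x * Y x η)| ≤ (pN:ℝ) * γ * Jm * K := by
          calc |(pN:ℝ) * γ * (J' x * Y x η)|
              = (pN:ℝ) * γ * |J' x * Y x η| := by
                rw [abs_mul, abs_of_nonneg hpNγ0]
            _ = (pN:ℝ) * γ * (|J' x| * |Y x η|) := by rw [abs_mul]
            _ ≤ (pN:ℝ) * γ * (Jm * K) := by
                refine mul_le_mul_of_nonneg_left ?_ hpNγ0
                exact mul_le_mul (hJ' x) (hYb x η) (abs_nonneg _) hJm0
            _ = (pN:ℝ) * γ * Jm * K := by ring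
        have h2 : ((pN:ℝ) * γ * (J' x * Y x η)) ^ 2 ≤ (pN:ℝ)^2 * γ^2 * Jm^2 * K^2 := by
          rw [← sq_abs]
          calc |(pN:ℝ) * γ * (J' x * Y x η)| ^ 2
              ≤ ((pN:ℝ) * γ * Jm * K) ^ 2 := pow_le_pow_left₀ (abs_nonneg _) h1 2
            _ = (pN:ℝ)^2 * γ^2 * Jm^2 * K^2 := by ring
        have h3 : Real.exp |(pN:ℝ) * γ * (J' x * Y x η)|
            ≤ Real.exp ((pN:ℝ) * γ * Jm * K) := Real.exp_le_exp.mpr h1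
        have h4 : ((pN:ℝ) * γ * (J' x * Y x η)) ^ 2 *
            Real.exp |(pN:ℝ) * γ * (J' x * Y x η)| ≤ bnd := by
          rw [hbnd]
          exact mul_le_mul h2 h3 (Real.exp_pos _).le hquad0
        nlinarith [h4]
      calc expect d n ρ (fun η => Real.exp ((pN:ℝ) * γ * (J' x * Y x η)))
          ≤ expect d n ρ (fun η => (1 + bnd) + ((pN:ℝ) * γ * J' x) * Y x η) :=
            expectR_mono hρ0' hρ1' hpt
        _ = (1 + bnd) + ((pN:ℝ) * γ * J' x) * expect d n ρ (Y x) :=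
            expectR_affine ρ (1 + bnd) ((pN:ℝ) * γ * J' x) (Y x)
        _ = 1 + bnd := by rw [hYmean x]; ring
        _ ≤ Real.exp bnd := by linarith [Real.add_one_le_exp bnd]
    -- group exponential moment
    have hgroup : ∀ c : Fin d → Fin m,
        expect d n ρ (fun η => Real.exp ((pN:ℝ) * γ *
          ∑ x ∈ Finset.univ.filter (fun x : Torus d n => col x = c), J' x * Y x η))
          ≤ Real.exp B := by
      intro c
      have hrw : (fun η => Real.exp ((pN:ℝ) * γ *
            ∑ x ∈ Finset.univ.filter (fun x : Torus d n => col x = c), J' x * Y x η))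
          = (fun η => ∏ x ∈ Finset.univ.filter (fun x : Torus d n => col x = c),
              Real.exp ((pN:ℝ) * γ * (J' x * Y x η))) := by
        funext η
        rw [Finset.mul_sum, Real.exp_sum]
      rw [hrw]
      have hfac : expect d n ρ (fun η =>
            ∏ x ∈ Finset.univ.filter (fun x : Torus d n => col x = c),
              Real.exp ((pN:ℝ) * γ * (J' x * Y x η)))
          = ∏ x ∈ Finset.univ.filter (fun x : Torus d n => col x = c),
              expect d n ρ (fun η => Real.exp ((pN:ℝ) * γ * (J' x * Y x η))) := by
        refine expect_prod_of_depOn _ _ A ?_ ?_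
        · intro x _ η ζ hagree
          show Real.exp ((pN:ℝ) * γ * (J' x * Y x η))
              = Real.exp ((pN:ℝ) * γ * (J' x * Y x ζ))
          rw [hYdep x η ζ hagree]
        · intro x hx y hy hxy
          refine hdisj x y ?_ hxy
          rw [(Finset.mem_filter.mp hx).2, (Finset.mem_filter.mp hy).2]
      rw [hfac]
      calc ∏ x ∈ Finset.univ.filter (fun x : Torus d n => col x = c),
            expect d n ρ (fun η => Real.exp ((pN:ℝ) * γ * (J' x * Y x η)))
          ≤ ∏ _x ∈ Finset.univ.filter (fun x : Torus d n => col x = c), Real.exp bnd :=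
            Finset.prod_le_prod
              (fun x _ => expectR_nonneg hρ0' hρ1' (fun η => (Real.exp_pos _).le))
              (fun x _ => hsite x)
        _ = Real.exp (((Finset.univ.filter (fun x : Torus d n => col x = c)).card : ℝ) * bnd) := by
            rw [Finset.prod_const, ← Real.exp_nat_mul]
        _ ≤ Real.exp B := by
            rw [Real.exp_le_exp, hB]
            refine mul_le_mul_of_nonneg_right ?_ hbnd0
            rw [← hcard]
            exact_mod_cast Finset.card_le_univ _
    -- AM-GM over the colour classes
    have hpt2 : ∀ η, Real.exp (γ * ∑ x : Torus d n, J' x * Y x η)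
        ≤ ∑ c : Fin d → Fin m, ((pN:ℝ))⁻¹ * Real.exp ((pN:ℝ) * γ *
            ∑ x ∈ Finset.univ.filter (fun x : Torus d n => col x = c), J' x * Y x η) := by
      intro η
      have hsplit : (∑ x : Torus d n, J' x * Y x η)
          = ∑ c : Fin d → Fin m,
              ∑ x ∈ Finset.univ.filter (fun x : Torus d n => col x = c), J' x * Y x η :=
        (Finset.sum_fiberwise _ _ _).symm
      have h1 : Real.exp (γ * ∑ x : Torus d n, J' x * Y x η)
          = ∏ c : Fin d → Fin m, Real.exp ((pN:ℝ) * γ *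
              ∑ x ∈ Finset.univ.filter (fun x : Torus d n => col x = c), J' x * Y x η)
                ^ ((pN:ℝ)⁻¹) := by
        rw [hsplit, Finset.mul_sum, Real.exp_sum]
        refine Finset.prod_congr rfl fun c _ => ?_
        rw [← Real.exp_mul]
        congr 1
        field_simp
      rw [h1]
      refine Real.geom_mean_le_arith_mean_weighted Finset.univ (fun _ => (pN:ℝ)⁻¹) _
        (fun _ _ => hpNinv0) ?_ (fun _ _ => (Real.exp_pos _).le)
      rw [Finset.sum_const, Finset.card_univ, ← hpN, nsmul_eq_mul]
      field_simp
    calc expect d n ρ (fun η => Real.exp (γ * ∑ x : Torus d n, J' x * Y x η))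
        ≤ expect d n ρ (fun η => ∑ c : Fin d → Fin m, ((pN:ℝ))⁻¹ *
            Real.exp ((pN:ℝ) * γ *
              ∑ x ∈ Finset.univ.filter (fun x : Torus d n => col x = c), J' x * Y x η)) :=
          expectR_mono hρ0' hρ1' hpt2
      _ = ∑ c : Fin d → Fin m, expect d n ρ (fun η => ((pN:ℝ))⁻¹ *
            Real.exp ((pN:ℝ) * γ *
              ∑ x ∈ Finset.univ.filter (fun x : Torus d n => col x = c), J' x * Y x η)) :=
          expectR_sum ρ _ _
      _ = ∑ c : Fin d → Fin m, ((pN:ℝ))⁻¹ * expect d n ρ (fun η =>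
            Real.exp ((pN:ℝ) * γ *
              ∑ x ∈ Finset.univ.filter (fun x : Torus d n => col x = c), J' x * Y x η)) :=
          Finset.sum_congr rfl fun c _ => expectR_smul ρ _ _
      _ ≤ ∑ _c : Fin d → Fin m, ((pN:ℝ))⁻¹ * Real.exp B :=
          Finset.sum_le_sum fun c _ =>
            mul_le_mul_of_nonneg_left (hgroup c) hpNinv0
      _ = Real.exp B := by
          rw [Finset.sum_const, Finset.card_univ, ← hpN, nsmul_eq_mul]
          field_simp
  -- the two exponential moments
  set V : Cfg d n → ℝ := fun η => ∑ x : Torus d n, J x * Y x η with hV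
  have hZplus : expect d n ρ (fun η => Real.exp (γ * V η)) ≤ Real.exp B := hkey J hJx
  have hZminus : expect d n ρ (fun η => Real.exp (-(γ * V η))) ≤ Real.exp B := by
    have h1 := hkey (fun x => -J x) (fun x => by rw [abs_neg]; exact hJx x)
    have h2 : (fun η => Real.exp (-(γ * V η)))
        = (fun η => Real.exp (γ * ∑ x : Torus d n, (fun x => -J x) x * Y x η)) := by
      funext η
      congr 1
      have h3 : ∑ x : Torus d n, -J x * Y x η = -∑ x : Torus d n, J x * Y x η := by
        rw [← Finset.sum_neg_distrib]
        exact Finset.sum_congr rfl fun x _ => by ring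
      show -(γ * V η) = γ * ∑ x : Torus d n, -J x * Y x η
      rw [h3, hV]
      ring
    rw [h2]
    exact h1
  -- the absolute-value exponential moment
  set Z : ℝ := expect d n ρ (fun η => Real.exp (γ * |V η|)) with hZ
  have hZle : Z ≤ 2 * Real.exp B := by
    have hpt : ∀ η, Real.exp (γ * |V η|)
        ≤ Real.exp (γ * V η) + Real.exp (-(γ * V η)) := by
      intro η
      rcases abs_cases (V η) with ⟨habs, _⟩ | ⟨habs, _⟩
      · rw [habs]
        linarith [Real.exp_pos (-(γ * V η))]
      · rw [habs, show γ * -V η = -(γ * V η) by ring]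
        linarith [Real.exp_pos (γ * V η)]
    calc Z ≤ expect d n ρ (fun η => Real.exp (γ * V η) + Real.exp (-(γ * V η))) :=
          expectR_mono hρ0' hρ1' hpt
      _ = expect d n ρ (fun η => Real.exp (γ * V η))
            + expect d n ρ (fun η => Real.exp (-(γ * V η))) := expectR_add ρ _ _
      _ ≤ Real.exp B + Real.exp B := add_le_add hZplus hZminus
      _ = 2 * Real.exp B := by ring
  have hZ1 : 1 ≤ Z := by
    have hpt : ∀ η : Cfg d n, (1:ℝ) ≤ Real.exp (γ * |V η|) := fun η =>
      Real.one_le_exp (by positivity)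
    calc (1:ℝ) = expect d n ρ (fun _ : Cfg d n => (1:ℝ)) := (expectR_const ρ 1).symm
      _ ≤ Z := expectR_mono hρ0' hρ1' hpt
  have hZpos : 0 < Z := lt_of_lt_of_le one_pos hZ1
  obtain ⟨hf0, hf1⟩ := hf
  -- the entropy inequality
  have hmain : γ * expect d n ρ (fun η => |V η| * f η)
      ≤ entropy d n ρ f + Real.log Z := by
    have hpt : ∀ η, f η * (γ * |V η| - Real.log Z)
        ≤ f η * Real.log (f η) - f η + Real.exp (γ * |V η|) / Z := by
      intro η
      have h1 := mul_le_entropy_term (hf0 η) (γ * |V η| - Real.log Z)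
      rwa [Real.exp_sub, Real.exp_log hZpos] at h1
    have hint := expectR_mono hρ0' hρ1' hpt
    have hf1' : ∑ η : Cfg d n, bern d n ρ η * f η = 1 := hf1
    have hL : expect d n ρ (fun η => f η * (γ * |V η| - Real.log Z))
        = γ * expect d n ρ (fun η => |V η| * f η) - Real.log Z := by
      have e1 : ∀ η : Cfg d n, bern d n ρ η * (f η * (γ * |V η| - Real.log Z))
          = γ * (bern d n ρ η * (|V η| * f η)) - Real.log Z * (bern d n ρ η * f η) :=
        fun η => by ring
      simp only [expect_def]
      simp only [e1, Finset.sum_sub_distrib, ← Finset.mul_sum]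
      rw [hf1', mul_one]
    have hR : expect d n ρ (fun η => f η * Real.log (f η) - f η + Real.exp (γ * |V η|) / Z)
        = entropy d n ρ f - 1 + Z⁻¹ * Z := by
      have e2 : ∀ η : Cfg d n,
          bern d n ρ η * (f η * Real.log (f η) - f η + Real.exp (γ * |V η|) / Z)
          = bern d n ρ η * (f η * Real.log (f η)) - bern d n ρ η * f η
            + Z⁻¹ * (bern d n ρ η * Real.exp (γ * |V η|)) := fun η => by
        rw [div_eq_mul_inv]
        ring
      have hent : entropy d n ρ f
          = ∑ η : Cfg d n, bern d n ρ η * (f η * Real.log (f η)) := rfl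
      have hZsum : Z = ∑ η : Cfg d n, bern d n ρ η * Real.exp (γ * |V η|) := rfl
      simp only [expect_def]
      simp only [e2, Finset.sum_add_distrib, Finset.sum_sub_distrib, ← Finset.mul_sum]
      rw [hf1', hent, hZsum]
    rw [hL, hR] at hint
    have hZZ : Z⁻¹ * Z = 1 := inv_mul_cancel₀ hZpos.ne'
    rw [hZZ] at hint
    linarith
  -- conclusion
  have hlogZ : Real.log Z ≤ Real.log 2 + B := by
    calc Real.log Z ≤ Real.log (2 * Real.exp B) := Real.log_le_log hZpos hZle
      _ = Real.log 2 + B := by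
          rw [Real.log_mul (by norm_num) (Real.exp_pos B).ne', Real.log_exp]
  have hmain2 : expect d n ρ (fun η => |V η| * f η)
      ≤ (1 / γ) * (entropy d n ρ f + Real.log 2) + B / γ := by
    have h1 : expect d n ρ (fun η => |V η| * f η)
        ≤ (1 / γ) * (entropy d n ρ f + Real.log Z) := by
      have he : expect d n ρ (fun η => |V η| * f η)
          = (1 / γ) * (γ * expect d n ρ (fun η => |V η| * f η)) := by
        field_simp
      rw [he]
      exact mul_le_mul_of_nonneg_left hmain (by positivity)
    calc expect d n ρ (fun η => |V η| * f η)
        ≤ (1 / γ) * (entropy d n ρ f + Real.log Z) := h1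
      _ ≤ (1 / γ) * (entropy d n ρ f + (Real.log 2 + B)) :=
          mul_le_mul_of_nonneg_left (by linarith) (by positivity)
      _ = (1 / γ) * (entropy d n ρ f + Real.log 2) + B / γ := by
          field_simp
          ring
  have hBb : B / γ ≤ C₀ * γ * (n:ℝ)^d * Jm^2 * Real.exp (C₀ * γ * Jm) := by
    have hBeq : B / γ
        = ((pN:ℝ)^2 * K^2 * γ * (n:ℝ)^d * Jm^2) * Real.exp (((pN:ℝ) * K) * (γ * Jm)) := by
      rw [hB, hbnd]
      rw [show (pN:ℝ) * γ * Jm * K = ((pN:ℝ) * K) * (γ * Jm) by ring]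
      field_simp
    rw [hBeq]
    have hexp : Real.exp (((pN:ℝ) * K) * (γ * Jm)) ≤ Real.exp (C₀ * γ * Jm) := by
      rw [Real.exp_le_exp]
      calc ((pN:ℝ) * K) * (γ * Jm) ≤ C₀ * (γ * Jm) :=
            mul_le_mul_of_nonneg_right hC₀2 (by positivity)
        _ = C₀ * γ * Jm := by ring
    have hX : (0:ℝ) ≤ γ * (n:ℝ)^d * Jm^2 := by positivity
    have ha : (pN:ℝ)^2 * K^2 * γ * (n:ℝ)^d * Jm^2 ≤ C₀ * γ * (n:ℝ)^d * Jm^2 := by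
      nlinarith [hC₀1, hX]
    have hnn : (0:ℝ) ≤ C₀ * γ * (n:ℝ)^d * Jm^2 :=
      mul_nonneg (mul_nonneg (mul_nonneg hC₀0 hγ.le) hnd0) (sq_nonneg Jm)
    exact mul_le_mul ha hexp (Real.exp_pos _).le hnn
  calc expect d n ρ (fun η =>
        |∑ x : Torus d n, J x * (cylAt h x η - h.tilde ρ)| * f η)
      = expect d n ρ (fun η => |V η| * f η) := rfl
    _ ≤ (1 / γ) * (entropy d n ρ f + Real.log 2) + B / γ := hmain2
    _ ≤ (1 / γ) * (entropy d n ρ f + Real.log 2)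
          + C₀ * γ * (n:ℝ)^d * Jm^2 * Real.exp (C₀ * γ * Jm) := by linarith [hBb]
end

section
/- Fix a cylinder function h : {0,1}^{ℤ^d} → ℝ. There exists a finite constant C₀, depending only on h, such that ∫ ( n^{−d/2} Σ_{x∈T^d_n} J_x ( h(τ_x η) − ~h(ρ) ) )² f dν^n_ρ ≤ C₀ ( H_n(f) + 1 ) ‖J‖²_∞ for every function J : T^d_n → ℝ, every density f with respect to ν^n_ρ, and every n large enough that the support of h fits in a cube of side n, where ‖J‖_∞ = max_x |J(x)|. -/
open Finset

set_option maxHeartbeats 1000000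

/-! ### Auxiliary development for `cylinder_field_square_bound` -/

namespace CFSB

open Real

/-! #### Elementary real inequalities -/

lemma young_ineq {u v : ℝ} (hu : 0 ≤ u) : u * v ≤ u * Real.log u - u + Real.exp v := by
  rcases eq_or_lt_of_le hu with h | h
  · simp only [← h, zero_mul, Real.log_zero, mul_zero, sub_zero, zero_sub, zero_add]
    have := Real.exp_pos v; linarith
  · have h1 : v - Real.log u + 1 ≤ Real.exp (v - Real.log u) := Real.add_one_le_exp _
    have h2 : Real.exp v = u * Real.exp (v - Real.log u) := by
      rw [Real.exp_sub, Real.exp_log h]; field_simp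
    have h3 := mul_le_mul_of_nonneg_left h1 hu
    nlinarith

lemma sub_one_le_mul_log {t : ℝ} (ht : 0 ≤ t) : t - 1 ≤ t * Real.log t := by
  rcases eq_or_lt_of_le ht with h | h
  · simp [← h]
  · have h1 : Real.log t⁻¹ ≤ t⁻¹ - 1 := Real.log_le_sub_one_of_pos (by positivity)
    rw [Real.log_inv] at h1
    have h3 : t * t⁻¹ = 1 := mul_inv_cancel₀ h.ne'
    nlinarith [mul_le_mul_of_nonneg_left h1 ht]

lemma pow_le_factorial_mul_exp {y : ℝ} (hy : 0 ≤ y) (k : ℕ) :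
    y ^ k ≤ (k.factorial : ℝ) * Real.exp y := by
  have h1 : y ^ k / (k.factorial : ℝ) ≤ Real.exp y := Real.pow_div_factorial_le_exp y hy k
  have h2 : (0 : ℝ) < (k.factorial : ℝ) := by exact_mod_cast k.factorial_pos
  calc y ^ k = (k.factorial : ℝ) * (y ^ k / (k.factorial : ℝ)) := by field_simp
    _ ≤ (k.factorial : ℝ) * Real.exp y := by
        exact mul_le_mul_of_nonneg_left h1 h2.le

lemma factorial_two_mul_le (m : ℕ) :
    ((2 * m).factorial : ℝ) ≤ (m.factorial : ℝ) * ((2 * m : ℕ) : ℝ) ^ m := by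
  have h1 : (2 * m - m).factorial * (2 * m).descFactorial m = (2 * m).factorial :=
    Nat.factorial_mul_descFactorial (by omega)
  have h2 : 2 * m - m = m := by omega
  rw [h2] at h1
  have h3 : (2 * m).descFactorial m ≤ (2 * m) ^ m := Nat.descFactorial_le_pow _ _
  have : (2 * m).factorial ≤ m.factorial * (2 * m) ^ m := by
    rw [← h1]; exact Nat.mul_le_mul_left _ h3
  exact_mod_cast this

lemma real_exp_tsum (x : ℝ) : Real.exp x = ∑' m : ℕ, x ^ m / (m.factorial : ℝ) := by
  rw [Real.exp_eq_exp_ℝ, NormedSpace.exp_eq_tsum_div]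

/-! #### Expectation toolbox -/

/-- Bernoulli weight of a single value. -/
noncomputable def wB (ρ : ℝ) (b : Bool) : ℝ := if b then ρ else 1 - ρ

lemma wB_nonneg {ρ : ℝ} (h0 : 0 ≤ ρ) (h1 : ρ ≤ 1) (b : Bool) : 0 ≤ wB ρ b := by
  cases b <;> simp [wB] <;> linarith

lemma wB_sum (ρ : ℝ) : wB ρ true + wB ρ false = 1 := by simp [wB]

variable {d n : ℕ} [NeZero n] {ρ : ℝ}

lemma bern_def (η : Cfg d n) : bern d n ρ η = ∏ x, wB ρ (η x) := rfl

lemma bern_nonneg (h0 : 0 ≤ ρ) (h1 : ρ ≤ 1) (η : Cfg d n) : 0 ≤ bern d n ρ η :=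
  Finset.prod_nonneg fun x _ => wB_nonneg h0 h1 (η x)

lemma expect_smul (c : ℝ) (f : Cfg d n → ℝ) :
    expect d n ρ (fun η => c * f η) = c * expect d n ρ f := by
  unfold _root_.expect; rw [Finset.mul_sum]; exact Finset.sum_congr rfl fun η _ => by ring

lemma expect_add (f g : Cfg d n → ℝ) :
    expect d n ρ (fun η => f η + g η) = expect d n ρ f + expect d n ρ g := by
  unfold _root_.expect; rw [← Finset.sum_add_distrib]
  exact Finset.sum_congr rfl fun η _ => by ring

lemma expect_sub (f g : Cfg d n → ℝ) :
    expect d n ρ (fun η => f η - g η) = expect d n ρ f - expect d n ρ g := by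
  unfold _root_.expect; rw [← Finset.sum_sub_distrib]
  exact Finset.sum_congr rfl fun η _ => by ring

lemma expect_sum {ι : Type*} (s : Finset ι) (F : ι → Cfg d n → ℝ) :
    expect d n ρ (fun η => ∑ i ∈ s, F i η) = ∑ i ∈ s, expect d n ρ (F i) := by
  unfold _root_.expect
  simp_rw [Finset.mul_sum]
  exact Finset.sum_comm

lemma expect_mono (h0 : 0 ≤ ρ) (h1 : ρ ≤ 1) {f g : Cfg d n → ℝ} (hfg : ∀ η, f η ≤ g η) :
    expect d n ρ f ≤ expect d n ρ g :=
  Finset.sum_le_sum fun η _ => mul_le_mul_of_nonneg_left (hfg η) (bern_nonneg h0 h1 η)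

lemma expect_nonneg (h0 : 0 ≤ ρ) (h1 : ρ ≤ 1) {f : Cfg d n → ℝ} (hf : ∀ η, 0 ≤ f η) :
    0 ≤ expect d n ρ f :=
  Finset.sum_nonneg fun η _ => mul_nonneg (bern_nonneg h0 h1 η) (hf η)

lemma sum_pi_bool {ι : Type*} [Fintype ι] [DecidableEq ι] (F : ι → Bool → ℝ) :
    ∑ v : ι → Bool, ∏ x, F x (v x) = ∏ x, (F x true + F x false) := by
  rw [← Fintype.prod_sum]
  exact Finset.prod_congr rfl fun x _ => Fintype.sum_bool _

lemma sum_pi_bool_wB {ι : Type*} [Fintype ι] [DecidableEq ι] (ρ : ℝ) :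
    ∑ v : ι → Bool, ∏ x, wB ρ (v x) = 1 := by
  rw [sum_pi_bool]
  simp [wB_sum]

lemma expect_one : expect d n ρ (fun _ => 1) = 1 := by
  unfold _root_.expect
  simp only [mul_one]
  have : ∀ η : Cfg d n, bern d n ρ η = ∏ x, wB ρ (η x) := fun η => rfl
  rw [Finset.sum_congr rfl fun η _ => this η]
  exact sum_pi_bool_wB ρ

lemma expect_const (c : ℝ) : expect d n ρ (fun _ => c) = c := by
  have := expect_smul (d := d) (n := n) (ρ := ρ) c (fun _ => 1)
  simpa [expect_one] using this

/-! #### Independence -/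

/-- `g` depends only on the coordinates in `A`. -/
def Dep (g : Cfg d n → ℝ) (A : Set (Torus d n)) : Prop :=
  ∀ η ζ : Cfg d n, (∀ x ∈ A, η x = ζ x) → g η = g ζ

lemma Dep.mono {g : Cfg d n → ℝ} {A B : Set (Torus d n)} (hAB : A ⊆ B) (hg : Dep g A) :
    Dep g B := fun η ζ hηζ => hg η ζ fun x hx => hηζ x (hAB hx)

lemma Dep.comp {g : Cfg d n → ℝ} {A : Set (Torus d n)} (hg : Dep g A) (φ : ℝ → ℝ) :
    Dep (fun η => φ (g η)) A := fun η ζ hηζ => congrArg φ (hg η ζ hηζ)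

lemma expect_mul_of_disjoint {A : Set (Torus d n)} {g h : Cfg d n → ℝ}
    (hg : Dep g A) (hh : Dep h Aᶜ) :
    expect d n ρ (fun η => g η * h η) = expect d n ρ g * expect d n ρ h := by
  classical
  set e := (Equiv.piEquivPiSubtypeProd (· ∈ A) (fun _ : Torus d n => Bool)) with he
  have hsum : ∀ G : Cfg d n → ℝ, ∑ η : Cfg d n, G η
      = ∑ u : {x // x ∈ A} → Bool, ∑ v : {x // x ∉ A} → Bool, G (e.symm (u, v)) := by
    intro G
    rw [← Equiv.sum_comp e.symm G, Fintype.sum_prod_type]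
  have happ : ∀ (u : {x // x ∈ A} → Bool) (v : {x // x ∉ A} → Bool) (x : Torus d n),
      e.symm (u, v) x = if hx : x ∈ A then u ⟨x, hx⟩ else v ⟨x, hx⟩ := by
    intro u v x
    simp [he, Equiv.piEquivPiSubtypeProd_symm_apply]
  set P : ({x // x ∈ A} → Bool) → ℝ := fun u => ∏ a : {x // x ∈ A}, wB ρ (u a) with hP
  set Q : ({x // x ∉ A} → Bool) → ℝ := fun v => ∏ b : {x // x ∉ A}, wB ρ (v b) with hQ
  have hbern : ∀ u v, bern d n ρ (e.symm (u, v)) = P u * Q v := by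
    intro u v
    rw [bern_def, ← Fintype.prod_subtype_mul_prod_subtype (fun x => x ∈ A)
      (fun x => wB ρ (e.symm (u, v) x))]
    congr 1
    · exact Finset.prod_congr rfl fun a _ => by rw [happ, dif_pos a.2]
    · exact Finset.prod_congr rfl fun b _ => by rw [happ, dif_neg b.2]
  set G1 : ({x // x ∈ A} → Bool) → ℝ := fun u => g (e.symm (u, fun _ => false)) with hG1
  set H1 : ({x // x ∉ A} → Bool) → ℝ := fun v => h (e.symm (fun _ => false, v)) with hH1
  have hgG : ∀ u v, g (e.symm (u, v)) = G1 u := by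
    intro u v
    exact hg _ _ fun x hx => by rw [happ, happ, dif_pos hx, dif_pos hx]
  have hhH : ∀ u v, h (e.symm (u, v)) = H1 v := by
    intro u v
    exact hh _ _ fun x hx => by rw [happ, happ, dif_neg hx, dif_neg hx]
  have hPone : ∑ u, P u = 1 := sum_pi_bool_wB ρ
  have hQone : ∑ v, Q v = 1 := sum_pi_bool_wB ρ
  have hLHS : expect d n ρ (fun η => g η * h η)
      = (∑ u, P u * G1 u) * (∑ v, Q v * H1 v) := by
    unfold _root_.expect
    rw [hsum, Finset.sum_mul_sum]
    exact Finset.sum_congr rfl fun u _ => Finset.sum_congr rfl fun v _ => by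
      simp only [hbern, hgG u v, hhH u v]; ring
  have hEg : expect d n ρ g = ∑ u, P u * G1 u := by
    unfold _root_.expect
    rw [hsum]
    have : ∀ u : {x // x ∈ A} → Bool, ∑ v, bern d n ρ (e.symm (u, v)) * g (e.symm (u, v))
        = P u * G1 u := by
      intro u
      have : ∀ v : {x // x ∉ A} → Bool,
          bern d n ρ (e.symm (u, v)) * g (e.symm (u, v)) = P u * G1 u * Q v := by
        intro v; rw [hbern, hgG u v]; ring
      rw [Finset.sum_congr rfl fun v _ => this v, ← Finset.mul_sum, hQone, mul_one]
    exact Finset.sum_congr rfl fun u _ => this u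
  have hEh : expect d n ρ h = ∑ v, Q v * H1 v := by
    unfold _root_.expect
    rw [hsum]
    have : ∀ u : {x // x ∈ A} → Bool, ∑ v, bern d n ρ (e.symm (u, v)) * h (e.symm (u, v))
        = P u * ∑ v, Q v * H1 v := by
      intro u
      rw [Finset.mul_sum]
      exact Finset.sum_congr rfl fun v _ => by rw [hbern, hhH u v]; ring
    rw [Finset.sum_congr rfl fun u _ => this u, ← Finset.sum_mul, hPone, one_mul]
  rw [hLHS, hEg, hEh]

lemma expect_prod_indep {ι : Type*} [DecidableEq ι] (s : Finset ι) (g : ι → Cfg d n → ℝ)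
    (A : ι → Set (Torus d n)) (hdep : ∀ i ∈ s, Dep (g i) (A i))
    (hdisj : ∀ i ∈ s, ∀ j ∈ s, i ≠ j → Disjoint (A i) (A j)) :
    expect d n ρ (fun η => ∏ i ∈ s, g i η) = ∏ i ∈ s, expect d n ρ (g i) := by
  classical
  induction s using Finset.induction_on with
  | empty => simpa using expect_one (d := d) (n := n) (ρ := ρ)
  | @insert a s ha ih =>
    have hprod : Dep (fun η => ∏ i ∈ s, g i η) (A a)ᶜ := by
      intro η ζ hηζ
      refine Finset.prod_congr rfl fun i hi => ?_
      refine hdep i (Finset.mem_insert_of_mem hi) η ζ fun x hx => ?_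
      refine hηζ x ?_
      intro hxa
      have hdj := hdisj i (Finset.mem_insert_of_mem hi) a (Finset.mem_insert_self a s)
        (fun hia => ha (hia ▸ hi))
      exact Set.disjoint_left.1 hdj hx hxa
    have h1 : expect d n ρ (fun η => ∏ i ∈ insert a s, g i η)
        = expect d n ρ (fun η => g a η * ∏ i ∈ s, g i η) := by
      apply congrArg
      funext η
      exact Finset.prod_insert ha
    rw [h1, expect_mul_of_disjoint (hdep a (Finset.mem_insert_self a s)) hprod,
      Finset.prod_insert ha,
      ih (fun i hi => hdep i (Finset.mem_insert_of_mem hi))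
        (fun i hi j hj hij => hdisj i (Finset.mem_insert_of_mem hi) j
          (Finset.mem_insert_of_mem hj) hij)]

/-! #### Indicators and marginals -/

/-- Indicator that the configuration takes value `b` at site `y`. -/
noncomputable def ind (y : Torus d n) (b : Bool) : Cfg d n → ℝ :=
  fun η => if η y = b then 1 else 0

lemma dep_ind (y : Torus d n) (b : Bool) : Dep (ind y b) {y} := by
  intro η ζ hηζ
  unfold ind
  rw [hηζ y rfl]

lemma expect_ind (y : Torus d n) (b : Bool) : expect d n ρ (ind y b) = wB ρ b := by
  classical
  unfold _root_.expect
  have key : ∀ η : Cfg d n, bern d n ρ η * ind y b η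
      = ∏ x, (wB ρ (η x) * (if x = y then (if η x = b then 1 else 0) else 1)) := by
    intro η
    rw [Finset.prod_mul_distrib, ← bern_def]
    congr 1
    rw [Finset.prod_ite_eq' Finset.univ y (fun x => if η x = b then (1:ℝ) else 0)]
    simp [ind]
  rw [Finset.sum_congr rfl fun η _ => key η]
  have := sum_pi_bool (ι := Torus d n)
    (fun x t => wB ρ t * (if x = y then (if t = b then 1 else 0) else 1))
  rw [this]
  have : ∀ x : Torus d n,
      (wB ρ true * (if x = y then (if true = b then 1 else 0) else 1)
        + wB ρ false * (if x = y then (if false = b then 1 else 0) else 1))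
      = if x = y then wB ρ b else 1 := by
    intro x
    by_cases hx : x = y
    · cases b <;> simp [hx, wB]
    · simp [hx, wB]
  rw [Finset.prod_congr rfl fun x _ => this x]
  rw [Finset.prod_ite_eq' Finset.univ y (fun _ => wB ρ b)]
  simp

lemma expect_prod_ind {ι : Type*} [Fintype ι] [DecidableEq ι] (φ : ι → Torus d n)
    (hφ : Function.Injective φ) (σ : ι → Bool) :
    expect d n ρ (fun η => ∏ i, ind (φ i) (σ i) η) = ∏ i, wB ρ (σ i) := by
  rw [expect_prod_indep Finset.univ (fun i => ind (φ i) (σ i)) (fun i => {φ i})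
    (fun i _ => dep_ind (φ i) (σ i))
    (fun i _ j _ hij => by
      rw [Set.disjoint_singleton]
      exact fun hc => hij (hφ hc))]
  exact Finset.prod_congr rfl fun i _ => expect_ind (φ i) (σ i)

lemma expect_mul_const (c : ℝ) (f : Cfg d n → ℝ) :
    expect d n ρ (fun η => f η * c) = expect d n ρ f * c := by
  unfold _root_.expect; rw [Finset.sum_mul]; exact Finset.sum_congr rfl fun η _ => by ring

lemma expect_res {ι : Type*} [Fintype ι] [DecidableEq ι] (φ : ι → Torus d n)
    (hφ : Function.Injective φ) (g : (ι → Bool) → ℝ) :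
    expect d n ρ (fun η => g (fun i => η (φ i)))
      = ∑ σ : ι → Bool, (∏ i, wB ρ (σ i)) * g σ := by
  classical
  have key : ∀ η : Cfg d n, g (fun i => η (φ i))
      = ∑ σ : ι → Bool, (∏ i, ind (φ i) (σ i) η) * g σ := by
    intro η
    have h1 : ∀ σ : ι → Bool, (∏ i, ind (φ i) (σ i) η)
        = if σ = (fun i => η (φ i)) then 1 else 0 := by
      intro σ
      unfold ind
      rw [Finset.prod_boole]
      congr 1
      simp only [eq_iff_iff]
      constructor
      · intro hall; funext i; exact (hall i (Finset.mem_univ i)).symm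
      · intro hσ i _; rw [hσ]
    calc g (fun i => η (φ i))
        = ∑ σ : ι → Bool, (if σ = (fun i => η (φ i)) then g σ else 0) := by
          rw [Finset.sum_ite_eq' Finset.univ (fun i => η (φ i)) g]
          simp
      _ = ∑ σ : ι → Bool, (∏ i, ind (φ i) (σ i) η) * g σ :=
          Finset.sum_congr rfl fun σ _ => by rw [h1 σ, ite_mul, one_mul, zero_mul]
  calc expect d n ρ (fun η => g fun i => η (φ i))
      = expect d n ρ (fun η => ∑ σ : ι → Bool, (∏ i, ind (φ i) (σ i) η) * g σ) := by
        apply congrArg; funext η; exact key η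
    _ = ∑ σ : ι → Bool, expect d n ρ (fun η => (∏ i, ind (φ i) (σ i) η) * g σ) :=
        expect_sum _ _
    _ = ∑ σ : ι → Bool, (∏ i, wB ρ (σ i)) * g σ := by
        refine Finset.sum_congr rfl fun σ _ => ?_
        rw [expect_mul_const, expect_prod_ind φ hφ σ]
/-! #### Cylinder functions on the torus -/

/-- The canonical extension of a boolean assignment on the support. -/
def extS {d : ℕ} (h : CylFun d) (σ : {z // z ∈ h.supp} → Bool) : ZCfg d :=
  fun z => if hz : z ∈ h.supp then σ ⟨z, hz⟩ else false

lemma tilde_eq {d : ℕ} (h : CylFun d) (ρ : ℝ) :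
    h.tilde ρ = ∑ σ : {z // z ∈ h.supp} → Bool,
      (∏ z, wB ρ (σ z)) * h.toFun (extS h σ) := rfl

lemma cylAt_eq (h : CylFun d) (x : Torus d n) (η : Cfg d n) :
    cylAt h x η = h.toFun (extS h (fun z => η (x + toTorus z.val))) := by
  unfold cylAt
  apply h.cyl
  intro z hz
  simp only [liftCfg, shiftCfg, extS, dif_pos hz]

lemma toTorus_injOn {S : Finset (Fin d → ℤ)} (hfit : FitsCube d S n) :
    ∀ z ∈ S, ∀ z' ∈ S, toTorus (n := n) z = toTorus z' → z = z' := by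
  obtain ⟨a, ha⟩ := hfit
  intro z hz z' hz' hEq
  funext i
  have h1 : ((z i : ℤ) : ZMod n) = ((z' i : ℤ) : ZMod n) := congrFun hEq i
  have h2 : ((n : ℕ) : ℤ) ∣ (z' i - z i) :=
    ((ZMod.intCast_eq_intCast_iff _ _ _).1 h1).dvd
  have hb1 := ha z hz i
  have hb2 := ha z' hz' i
  have h3 : z' i - z i = 0 := by
    refine Int.eq_zero_of_abs_lt_dvd h2 ?_
    rw [abs_lt]
    omega
  omega

/-- The sites on which `cylAt h x` depends. -/
def siteMap (h : CylFun d) (x : Torus d n) (z : {z // z ∈ h.supp}) : Torus d n :=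
  x + toTorus z.val

lemma siteMap_inj (h : CylFun d) (hfit : FitsCube d h.supp n) (x : Torus d n) :
    Function.Injective (siteMap h x) := by
  intro z z' hzz'
  have h1 : toTorus (n := n) z.val = toTorus z'.val := by
    have := hzz'
    unfold siteMap at this
    exact add_left_cancel this
  exact Subtype.ext (toTorus_injOn hfit z.val z.2 z'.val z'.2 h1)

lemma dep_cylAt (h : CylFun d) (x : Torus d n) :
    Dep (fun η => cylAt h x η) (Set.range (siteMap h x)) := by
  intro η ζ hηζ
  show cylAt h x η = cylAt h x ζ
  rw [cylAt_eq, cylAt_eq]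
  congr 1
  unfold extS
  funext z
  by_cases hz : z ∈ h.supp
  · simp only [dif_pos hz]
    exact hηζ _ ⟨⟨z, hz⟩, rfl⟩
  · simp only [dif_neg hz]

lemma expect_cylAt (h : CylFun d) (hfit : FitsCube d h.supp n) (x : Torus d n) :
    expect d n ρ (fun η => cylAt h x η) = h.tilde ρ := by
  have h1 : (fun η : Cfg d n => cylAt h x η)
      = fun η => (fun σ => h.toFun (extS h σ)) (fun z => η (siteMap h x z)) := by
    funext η; exact cylAt_eq h x η
  have h2 := expect_res (ρ := ρ) (siteMap h x) (siteMap_inj h hfit x)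
    (fun σ => h.toFun (extS h σ))
  rw [h1]
  rw [h2]
  exact (tilde_eq h ρ).symm

/-- A uniform bound on `|h|`. -/
noncomputable def M0 {d : ℕ} (h : CylFun d) : ℝ :=
  Finset.univ.sup'
    (Finset.univ_nonempty (α := {z // z ∈ h.supp} → Bool))
    (fun σ => |h.toFun (extS h σ)|)

lemma abs_toFun_le {d : ℕ} (h : CylFun d) (η : ZCfg d) : |h.toFun η| ≤ M0 h := by
  have h1 : h.toFun η = h.toFun (extS h (fun z => η z.val)) := by
    apply h.cyl
    intro z hz
    simp only [extS, dif_pos hz]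
  rw [h1]
  unfold M0
  exact Finset.le_sup' (fun σ => |h.toFun (extS h σ)|) (Finset.mem_univ _)

lemma M0_nonneg {d : ℕ} (h : CylFun d) : 0 ≤ M0 h :=
  le_trans (abs_nonneg _) (abs_toFun_le h (fun _ => false))

lemma abs_tilde_le {d : ℕ} (h : CylFun d) {ρ : ℝ} (h0 : 0 ≤ ρ) (h1 : ρ ≤ 1) :
    |h.tilde ρ| ≤ M0 h := by
  rw [tilde_eq]
  calc |∑ σ : {z // z ∈ h.supp} → Bool, (∏ z, wB ρ (σ z)) * h.toFun (extS h σ)|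
      ≤ ∑ σ : {z // z ∈ h.supp} → Bool, |(∏ z, wB ρ (σ z)) * h.toFun (extS h σ)| :=
        Finset.abs_sum_le_sum_abs _ _
    _ ≤ ∑ σ : {z // z ∈ h.supp} → Bool, (∏ z, wB ρ (σ z)) * M0 h := by
        refine Finset.sum_le_sum fun σ _ => ?_
        rw [abs_mul]
        have hw : 0 ≤ ∏ z, wB ρ (σ z) := Finset.prod_nonneg fun z _ => wB_nonneg h0 h1 _
        rw [abs_of_nonneg hw]
        exact mul_le_mul_of_nonneg_left (abs_toFun_le h _) hw
    _ = M0 h := by rw [← Finset.sum_mul, sum_pi_bool_wB, one_mul]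

/-- The constant `M` bounding the centered cylinder variable, always `≥ 1`. -/
noncomputable def Mh {d : ℕ} (h : CylFun d) : ℝ := 2 * M0 h + 1

lemma Mh_ge_one {d : ℕ} (h : CylFun d) : 1 ≤ Mh h := by
  have := M0_nonneg h; unfold Mh; linarith

lemma Mh_pos {d : ℕ} (h : CylFun d) : 0 < Mh h := lt_of_lt_of_le one_pos (Mh_ge_one h)

/-- The centered cylinder variable `ξ_x`. -/
noncomputable def xi (h : CylFun d) (ρ : ℝ) (x : Torus d n) (η : Cfg d n) : ℝ :=
  cylAt h x η - h.tilde ρ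

lemma abs_xi_le (h : CylFun d) {ρ : ℝ} (h0 : 0 ≤ ρ) (h1 : ρ ≤ 1) (x : Torus d n)
    (η : Cfg d n) : |xi h ρ x η| ≤ Mh h := by
  unfold xi Mh
  calc |cylAt h x η - h.tilde ρ| ≤ |cylAt h x η| + |h.tilde ρ| := abs_sub _ _
    _ ≤ M0 h + M0 h := add_le_add (abs_toFun_le h _) (abs_tilde_le h h0 h1)
    _ ≤ 2 * M0 h + 1 := by linarith

lemma expect_xi (h : CylFun d) (hfit : FitsCube d h.supp n) (x : Torus d n) :
    expect d n ρ (fun η => xi h ρ x η) = 0 := by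
  unfold xi
  rw [expect_sub, expect_cylAt h hfit x, expect_const, sub_self]

lemma dep_xi (h : CylFun d) (ρ : ℝ) (x : Torus d n) :
    Dep (fun η => xi h ρ x η) (Set.range (siteMap h x)) := by
  intro η ζ hηζ
  exact congrArg (fun r => r - h.tilde ρ) (dep_cylAt h x η ζ hηζ)

/-! #### Greedy colouring -/

lemma exists_coloring {V : Type*} [Fintype V] [DecidableEq V] (adj : V → V → Prop)
    [DecidableRel adj]
    (hsym : ∀ x y, adj x y → adj y x) (hirr : ∀ x, ¬ adj x x) (K : ℕ) (hK : 0 < K)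
    (hdeg : ∀ v : V, ((Finset.univ : Finset V).filter (fun y => adj v y)).card < K) :
    ∃ c : V → Fin K, ∀ x y, adj x y → c x ≠ c y := by
  classical
  suffices hs : ∀ s : Finset V, ∃ c : V → Fin K, ∀ x ∈ s, ∀ y ∈ s, adj x y → c x ≠ c y by
    obtain ⟨c, hc⟩ := hs Finset.univ
    exact ⟨c, fun x y hxy => hc x (Finset.mem_univ x) y (Finset.mem_univ y) hxy⟩
  intro s
  induction s using Finset.induction_on with
  | empty => exact ⟨fun _ => ⟨0, hK⟩, fun x hx => absurd hx (Finset.notMem_empty x)⟩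
  | @insert a s ha ih =>
    obtain ⟨c, hc⟩ := ih
    set N : Finset V := s.filter (fun y => adj a y) with hN
    have hcard : (N.image c).card < K := by
      calc (N.image c).card ≤ N.card := Finset.card_image_le
        _ ≤ ((Finset.univ : Finset V).filter (fun y => adj a y)).card :=
            Finset.card_le_card (Finset.filter_subset_filter _ (Finset.subset_univ s))
        _ < K := hdeg a
    have hex : ∃ k : Fin K, k ∉ N.image c := by
      by_contra hcon
      push_neg at hcon
      have : (Finset.univ : Finset (Fin K)) ⊆ N.image c := fun k _ => hcon k
      have := Finset.card_le_card this
      rw [Finset.card_univ, Fintype.card_fin] at this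
      omega
    obtain ⟨k, hk⟩ := hex
    refine ⟨Function.update c a k, ?_⟩
    intro x hx y hy hxy
    rcases Finset.mem_insert.1 hx with hxa | hxs <;>
      rcases Finset.mem_insert.1 hy with hya | hys
    · have : adj a a := by rwa [hxa, hya] at hxy
      exact absurd this (hirr a)
    · have hyne : y ≠ a := fun hc' => ha (hc' ▸ hys)
      rw [hxa, Function.update_self, Function.update_of_ne hyne]
      have hadj : adj a y := by rwa [hxa] at hxy
      intro hcy
      apply hk
      refine Finset.mem_image.2 ⟨y, ?_, hcy.symm⟩
      rw [hN, Finset.mem_filter]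
      exact ⟨hys, hadj⟩
    · have hxne : x ≠ a := fun hc' => ha (hc' ▸ hxs)
      rw [hya, Function.update_self, Function.update_of_ne hxne]
      have hadj : adj x a := by rwa [hya] at hxy
      intro hcx
      apply hk
      refine Finset.mem_image.2 ⟨x, ?_, hcx⟩
      rw [hN, Finset.mem_filter]
      exact ⟨hxs, hsym x a hadj⟩
    · have hxne : x ≠ a := fun hc' => ha (hc' ▸ hxs)
      have hyne : y ≠ a := fun hc' => ha (hc' ▸ hys)
      rw [Function.update_of_ne hxne, Function.update_of_ne hyne]
      exact hc x hxs y hys hxy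
/-! #### Moment generating function bounds -/

lemma mgf_site (h : CylFun d) (h0 : 0 ≤ ρ) (h1 : ρ ≤ 1) (hfit : FitsCube d h.supp n)
    (x : Torus d n) (s : ℝ) :
    expect d n ρ (fun η => Real.exp (s * xi h ρ x η))
      ≤ Real.exp (s ^ 2 * Mh h ^ 2 / 2) := by
  have hM : 0 < Mh h := Mh_pos h
  have hpt : ∀ η, Real.exp (s * xi h ρ x η)
      ≤ (Mh h + xi h ρ x η) / (2 * Mh h) * Real.exp (s * Mh h)
        + (Mh h - xi h ρ x η) / (2 * Mh h) * Real.exp (-(s * Mh h)) := by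
    intro η
    have hξ := abs_xi_le h h0 h1 x η
    rw [abs_le] at hξ
    have ha : 0 ≤ (Mh h + xi h ρ x η) / (2 * Mh h) :=
      div_nonneg (by linarith [hξ.1]) (by linarith)
    have hb : 0 ≤ (Mh h - xi h ρ x η) / (2 * Mh h) :=
      div_nonneg (by linarith [hξ.2]) (by linarith)
    have hab : (Mh h + xi h ρ x η) / (2 * Mh h) + (Mh h - xi h ρ x η) / (2 * Mh h) = 1 := by
      field_simp
      ring
    have key := convexOn_exp.2 (Set.mem_univ (s * Mh h)) (Set.mem_univ (-(s * Mh h))) ha hb hab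
    simp only [smul_eq_mul] at key
    have harg : (Mh h + xi h ρ x η) / (2 * Mh h) * (s * Mh h)
        + (Mh h - xi h ρ x η) / (2 * Mh h) * (-(s * Mh h)) = s * xi h ρ x η := by
      field_simp
      ring
    rwa [harg] at key
  have hE : expect d n ρ (fun η => (Mh h + xi h ρ x η) / (2 * Mh h) * Real.exp (s * Mh h)
      + (Mh h - xi h ρ x η) / (2 * Mh h) * Real.exp (-(s * Mh h))) = Real.cosh (s * Mh h) := by
    have hrw : (fun η : Cfg d n => (Mh h + xi h ρ x η) / (2 * Mh h) * Real.exp (s * Mh h)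
        + (Mh h - xi h ρ x η) / (2 * Mh h) * Real.exp (-(s * Mh h)))
        = fun η => (Real.exp (s * Mh h) / (2 * Mh h)) * (Mh h + xi h ρ x η)
          + (Real.exp (-(s * Mh h)) / (2 * Mh h)) * (Mh h - xi h ρ x η) := by
      funext η
      ring
    rw [hrw, expect_add, expect_smul, expect_smul]
    have e1 : expect d n ρ (fun η => Mh h + xi h ρ x η) = Mh h := by
      rw [expect_add (fun _ => Mh h) (fun η => xi h ρ x η), expect_const,
        expect_xi h hfit x, add_zero]
    have e2 : expect d n ρ (fun η => Mh h - xi h ρ x η) = Mh h := by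
      rw [expect_sub (fun _ => Mh h) (fun η => xi h ρ x η), expect_const,
        expect_xi h hfit x, sub_zero]
    rw [e1, e2, Real.cosh_eq]
    field_simp
  calc expect d n ρ (fun η => Real.exp (s * xi h ρ x η))
      ≤ expect d n ρ (fun η => (Mh h + xi h ρ x η) / (2 * Mh h) * Real.exp (s * Mh h)
          + (Mh h - xi h ρ x η) / (2 * Mh h) * Real.exp (-(s * Mh h))) :=
        expect_mono h0 h1 hpt
    _ = Real.cosh (s * Mh h) := hE
    _ ≤ Real.exp ((s * Mh h) ^ 2 / 2) := Real.cosh_le_exp_half_sq (s * Mh h)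
    _ = Real.exp (s ^ 2 * Mh h ^ 2 / 2) := by rw [mul_pow]

lemma mgf_block (h : CylFun d) (h0 : 0 ≤ ρ) (h1 : ρ ≤ 1) (hfit : FitsCube d h.supp n)
    (B : Finset (Torus d n)) (a : Torus d n → ℝ)
    (hdisj : ∀ x ∈ B, ∀ y ∈ B, x ≠ y →
      Disjoint (Set.range (siteMap h x)) (Set.range (siteMap h y)))
    (ha : ∑ x ∈ B, (a x) ^ 2 ≤ 1) (t : ℝ) :
    expect d n ρ (fun η => Real.exp (t * ∑ x ∈ B, a x * xi h ρ x η))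
      ≤ Real.exp (t ^ 2 * Mh h ^ 2 / 2) := by
  have hrw : (fun η : Cfg d n => Real.exp (t * ∑ x ∈ B, a x * xi h ρ x η))
      = fun η => ∏ x ∈ B, Real.exp (t * a x * xi h ρ x η) := by
    funext η
    rw [← Real.exp_sum]
    congr 1
    rw [Finset.mul_sum]
    exact Finset.sum_congr rfl fun x _ => by ring
  rw [hrw, expect_prod_indep B _ (fun x => Set.range (siteMap h x))
    (fun x _ => (dep_xi h ρ x).comp (fun r => Real.exp (t * a x * r))) hdisj]
  calc ∏ x ∈ B, expect d n ρ (fun η => Real.exp (t * a x * xi h ρ x η))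
      ≤ ∏ x ∈ B, Real.exp ((t * a x) ^ 2 * Mh h ^ 2 / 2) := by
        refine Finset.prod_le_prod
          (fun x _ => expect_nonneg h0 h1 fun η => (Real.exp_pos _).le)
          (fun x _ => mgf_site h h0 h1 hfit x (t * a x))
    _ = Real.exp (∑ x ∈ B, (t * a x) ^ 2 * Mh h ^ 2 / 2) := (Real.exp_sum _ _).symm
    _ ≤ Real.exp (t ^ 2 * Mh h ^ 2 / 2) := by
        apply Real.exp_le_exp.2
        have hsum : ∑ x ∈ B, (t * a x) ^ 2 * Mh h ^ 2 / 2
            = (t ^ 2 * Mh h ^ 2 / 2) * ∑ x ∈ B, (a x) ^ 2 := by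
          rw [Finset.mul_sum]
          exact Finset.sum_congr rfl fun x _ => by ring
        rw [hsum]
        calc (t ^ 2 * Mh h ^ 2 / 2) * ∑ x ∈ B, (a x) ^ 2
            ≤ (t ^ 2 * Mh h ^ 2 / 2) * 1 := by
              apply mul_le_mul_of_nonneg_left ha (by positivity)
          _ = t ^ 2 * Mh h ^ 2 / 2 := mul_one _

lemma moment_block (h : CylFun d) (h0 : 0 ≤ ρ) (h1 : ρ ≤ 1) (hfit : FitsCube d h.supp n)
    (B : Finset (Torus d n)) (a : Torus d n → ℝ)
    (hdisj : ∀ x ∈ B, ∀ y ∈ B, x ≠ y →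
      Disjoint (Set.range (siteMap h x)) (Set.range (siteMap h y)))
    (ha : ∑ x ∈ B, (a x) ^ 2 ≤ 1) (m : ℕ) (hm : 1 ≤ m) :
    expect d n ρ (fun η => (∑ x ∈ B, a x * xi h ρ x η) ^ (2 * m))
      ≤ 2 * ((2 * m).factorial : ℝ) * (Mh h ^ 2 / (2 * (m : ℝ))) ^ m * Real.exp 1 ^ m := by
  have hM : 0 < Mh h := Mh_pos h
  have hmpos : (0 : ℝ) < 2 * (m : ℝ) := by
    have : (1 : ℝ) ≤ (m : ℝ) := by exact_mod_cast hm
    linarith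
  set t : ℝ := Real.sqrt (2 * (m : ℝ)) / Mh h with htdef
  have ht : 0 < t := div_pos (Real.sqrt_pos.2 hmpos) hM
  have ht2 : t ^ 2 = 2 * (m : ℝ) / Mh h ^ 2 := by
    rw [htdef, div_pow, Real.sq_sqrt hmpos.le]
  set Y : Cfg d n → ℝ := fun η => ∑ x ∈ B, a x * xi h ρ x η with hYdef
  have hpt : ∀ η, Y η ^ (2 * m) ≤ ((2 * m).factorial : ℝ) / t ^ (2 * m)
      * (Real.exp (t * Y η) + Real.exp (-(t * Y η))) := by
    intro η
    have h1' : |t * Y η| ^ (2 * m) ≤ ((2 * m).factorial : ℝ) * Real.exp |t * Y η| :=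
      pow_le_factorial_mul_exp (abs_nonneg _) (2 * m)
    have h2' : Real.exp |t * Y η| ≤ Real.exp (t * Y η) + Real.exp (-(t * Y η)) := by
      rcases abs_cases (t * Y η) with ⟨hab, _⟩ | ⟨hab, _⟩
      · rw [hab]; nlinarith [Real.exp_pos (-(t * Y η))]
      · rw [hab]; nlinarith [Real.exp_pos (t * Y η)]
    have h3' : |t * Y η| ^ (2 * m) = t ^ (2 * m) * Y η ^ (2 * m) := by
      rw [Even.pow_abs ⟨m, by ring⟩, mul_pow]
    rw [h3'] at h1'
    have htpow : 0 < t ^ (2 * m) := pow_pos ht _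
    have h4' : t ^ (2 * m) * Y η ^ (2 * m)
        ≤ ((2 * m).factorial : ℝ) * (Real.exp (t * Y η) + Real.exp (-(t * Y η))) := by
      calc t ^ (2 * m) * Y η ^ (2 * m) ≤ ((2 * m).factorial : ℝ) * Real.exp |t * Y η| := h1'
        _ ≤ ((2 * m).factorial : ℝ) * (Real.exp (t * Y η) + Real.exp (-(t * Y η))) := by
            apply mul_le_mul_of_nonneg_left h2' (by positivity)
    calc Y η ^ (2 * m) = (t ^ (2 * m) * Y η ^ (2 * m)) / t ^ (2 * m) := by field_simp
      _ ≤ (((2 * m).factorial : ℝ) * (Real.exp (t * Y η) + Real.exp (-(t * Y η))))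
            / t ^ (2 * m) := by gcongr
      _ = ((2 * m).factorial : ℝ) / t ^ (2 * m)
            * (Real.exp (t * Y η) + Real.exp (-(t * Y η))) := by ring
  have hmgf1 : expect d n ρ (fun η => Real.exp (t * Y η)) ≤ Real.exp (t ^ 2 * Mh h ^ 2 / 2) :=
    mgf_block h h0 h1 hfit B a hdisj ha t
  have hmgf2 : expect d n ρ (fun η => Real.exp (-(t * Y η)))
      ≤ Real.exp (t ^ 2 * Mh h ^ 2 / 2) := by
    have := mgf_block h h0 h1 hfit B a hdisj ha (-t)
    have hneg : (fun η : Cfg d n => Real.exp (-(t * Y η)))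
        = fun η => Real.exp ((-t) * Y η) := by funext η; rw [neg_mul]
    rw [hneg]
    calc expect d n ρ (fun η => Real.exp ((-t) * Y η))
        ≤ Real.exp ((-t) ^ 2 * Mh h ^ 2 / 2) := this
      _ = Real.exp (t ^ 2 * Mh h ^ 2 / 2) := by rw [neg_sq]
  have hexpm : t ^ 2 * Mh h ^ 2 / 2 = (m : ℝ) := by
    rw [ht2]; field_simp
  calc expect d n ρ (fun η => Y η ^ (2 * m))
      ≤ expect d n ρ (fun η => ((2 * m).factorial : ℝ) / t ^ (2 * m)
          * (Real.exp (t * Y η) + Real.exp (-(t * Y η)))) := expect_mono h0 h1 hpt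
    _ = ((2 * m).factorial : ℝ) / t ^ (2 * m)
          * (expect d n ρ (fun η => Real.exp (t * Y η))
            + expect d n ρ (fun η => Real.exp (-(t * Y η)))) := by
        rw [expect_smul, expect_add]
    _ ≤ ((2 * m).factorial : ℝ) / t ^ (2 * m)
          * (Real.exp (t ^ 2 * Mh h ^ 2 / 2) + Real.exp (t ^ 2 * Mh h ^ 2 / 2)) := by
        apply mul_le_mul_of_nonneg_left (add_le_add hmgf1 hmgf2) (by positivity)
    _ = 2 * ((2 * m).factorial : ℝ) * (Mh h ^ 2 / (2 * (m : ℝ))) ^ m * Real.exp 1 ^ m := by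
        rw [hexpm, Real.exp_one_pow]
        have e1 : t ^ (2 * m) = (2 * (m : ℝ) / Mh h ^ 2) ^ m := by
          rw [pow_mul, ht2]
        rw [e1, div_eq_mul_inv, ← inv_pow, inv_div]
        ring
lemma expsq_block (h : CylFun d) (h0 : 0 ≤ ρ) (h1 : ρ ≤ 1) (hfit : FitsCube d h.supp n)
    (B : Finset (Torus d n)) (a : Torus d n → ℝ)
    (hdisj : ∀ x ∈ B, ∀ y ∈ B, x ≠ y →
      Disjoint (Set.range (siteMap h x)) (Set.range (siteMap h y)))
    (ha : ∑ x ∈ B, (a x) ^ 2 ≤ 1) :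
    expect d n ρ (fun η => Real.exp ((4 * Real.exp 1 * Mh h ^ 2)⁻¹
      * (∑ x ∈ B, a x * xi h ρ x η) ^ 2)) ≤ 3 := by
  have hM : 0 < Mh h := Mh_pos h
  set β : ℝ := (4 * Real.exp 1 * Mh h ^ 2)⁻¹ with hβ
  have hβpos : 0 < β := by
    rw [hβ]
    have := Real.exp_pos 1
    positivity
  set Y : Cfg d n → ℝ := fun η => ∑ x ∈ B, a x * xi h ρ x η with hYdef
  set F : ℕ → ℝ := fun m => ∑ η : Cfg d n, bern d n ρ η * ((β * Y η ^ 2) ^ m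
    / ((m.factorial : ℝ))) with hFdef
  have hsummable : ∀ η : Cfg d n,
      Summable (fun m : ℕ => bern d n ρ η * ((β * Y η ^ 2) ^ m / ((m.factorial : ℝ)))) :=
    fun η => (Real.summable_pow_div_factorial _).mul_left _
  have hswap : expect d n ρ (fun η => Real.exp (β * Y η ^ 2)) = ∑' m, F m := by
    unfold _root_.expect
    have hη : ∀ η : Cfg d n, bern d n ρ η * Real.exp (β * Y η ^ 2)
        = ∑' m : ℕ, bern d n ρ η * ((β * Y η ^ 2) ^ m / ((m.factorial : ℝ))) := by
      intro η
      rw [real_exp_tsum, ← tsum_mul_left]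
    rw [Finset.sum_congr rfl fun η _ => hη η]
    exact (Summable.tsum_finsetSum (fun η _ => hsummable η)).symm
  have hterm : ∀ m : ℕ, F m ≤ 2 * (1 / 4 : ℝ) ^ m := by
    intro m
    rcases Nat.eq_zero_or_pos m with hm0 | hmpos
    · subst hm0
      have : F 0 = 1 := by
        rw [hFdef]
        simp only [pow_zero, Nat.factorial_zero, Nat.cast_one, div_one, mul_one]
        have := expect_one (d := d) (n := n) (ρ := ρ)
        unfold _root_.expect at this
        simpa using this
      rw [this]
      norm_num
    · have hF : F m = β ^ m / ((m.factorial : ℝ))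
          * expect d n ρ (fun η => Y η ^ (2 * m)) := by
        rw [hFdef]
        unfold _root_.expect
        rw [Finset.mul_sum]
        refine Finset.sum_congr rfl fun η _ => ?_
        rw [mul_pow, ← pow_mul]
        ring
      rw [hF]
      have hmom := moment_block h h0 h1 hfit B a hdisj ha m hmpos
      have hmono : β ^ m / ((m.factorial : ℝ)) * expect d n ρ (fun η => Y η ^ (2 * m))
          ≤ β ^ m / ((m.factorial : ℝ)) * (2 * ((2 * m).factorial : ℝ)
              * (Mh h ^ 2 / (2 * (m : ℝ))) ^ m * Real.exp 1 ^ m) := by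
        apply mul_le_mul_of_nonneg_left hmom (by positivity)
      have hq : β * Mh h ^ 2 * Real.exp 1 = 1 / 4 := by
        rw [hβ]
        have he := Real.exp_pos 1
        field_simp
      have hmR : (0 : ℝ) < 2 * (m : ℝ) := by
        have : (1 : ℝ) ≤ (m : ℝ) := by exact_mod_cast hmpos
        linarith
      have hfact : ((2 * m).factorial : ℝ) ≤ (m.factorial : ℝ) * (2 * (m : ℝ)) ^ m := by
        have := factorial_two_mul_le m
        have hcast : ((2 * m : ℕ) : ℝ) = 2 * (m : ℝ) := by push_cast; ring
        rwa [hcast] at this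
      have hfactpos : (0 : ℝ) < (m.factorial : ℝ) := by exact_mod_cast m.factorial_pos
      have hbound : β ^ m / ((m.factorial : ℝ)) * (2 * ((2 * m).factorial : ℝ)
          * (Mh h ^ 2 / (2 * (m : ℝ))) ^ m * Real.exp 1 ^ m) ≤ 2 * (1 / 4 : ℝ) ^ m := by
        have step1 : β ^ m / ((m.factorial : ℝ)) * (2 * ((2 * m).factorial : ℝ)
            * (Mh h ^ 2 / (2 * (m : ℝ))) ^ m * Real.exp 1 ^ m)
            ≤ β ^ m / ((m.factorial : ℝ)) * (2 * ((m.factorial : ℝ) * (2 * (m : ℝ)) ^ m)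
              * (Mh h ^ 2 / (2 * (m : ℝ))) ^ m * Real.exp 1 ^ m) := by
          gcongr
        have hcanc : (2 * (m : ℝ)) * (Mh h ^ 2 / (2 * (m : ℝ))) = Mh h ^ 2 := by
          field_simp
        have step2 : β ^ m / ((m.factorial : ℝ)) * (2 * ((m.factorial : ℝ)
            * (2 * (m : ℝ)) ^ m) * (Mh h ^ 2 / (2 * (m : ℝ))) ^ m * Real.exp 1 ^ m)
            = 2 * (β * Mh h ^ 2 * Real.exp 1) ^ m := by
          have e1 : (2 * (m : ℝ)) ^ m * (Mh h ^ 2 / (2 * (m : ℝ))) ^ m = (Mh h ^ 2) ^ m := by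
            rw [← mul_pow, hcanc]
          have e2 : (β * Mh h ^ 2 * Real.exp 1) ^ m
              = β ^ m * (Mh h ^ 2) ^ m * Real.exp 1 ^ m := by
            rw [mul_pow, mul_pow]
          rw [e2, ← e1]
          field_simp
        calc β ^ m / ((m.factorial : ℝ)) * (2 * ((2 * m).factorial : ℝ)
            * (Mh h ^ 2 / (2 * (m : ℝ))) ^ m * Real.exp 1 ^ m)
            ≤ β ^ m / ((m.factorial : ℝ)) * (2 * ((m.factorial : ℝ) * (2 * (m : ℝ)) ^ m)
              * (Mh h ^ 2 / (2 * (m : ℝ))) ^ m * Real.exp 1 ^ m) := step1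
          _ = 2 * (β * Mh h ^ 2 * Real.exp 1) ^ m := step2
          _ = 2 * (1 / 4 : ℝ) ^ m := by rw [hq]
      exact le_trans hmono hbound
  have hFnonneg : ∀ m, 0 ≤ F m := by
    intro m
    refine Finset.sum_nonneg fun η _ => mul_nonneg (bern_nonneg h0 h1 η) ?_
    have hY2 : 0 ≤ β * Y η ^ 2 := by positivity
    positivity
  have hgsummable : Summable (fun m : ℕ => 2 * (1 / 4 : ℝ) ^ m) :=
    (summable_geometric_of_lt_one (by norm_num) (by norm_num)).mul_left 2
  have hFsummable : Summable F := Summable.of_nonneg_of_le hFnonneg hterm hgsummable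
  calc expect d n ρ (fun η => Real.exp (β * Y η ^ 2)) = ∑' m, F m := hswap
    _ ≤ ∑' m : ℕ, 2 * (1 / 4 : ℝ) ^ m := Summable.tsum_le_tsum hterm hFsummable hgsummable
    _ = 2 * (1 - 1 / 4 : ℝ)⁻¹ := by
        rw [tsum_mul_left, tsum_geometric_of_lt_one (by norm_num) (by norm_num)]
    _ ≤ 3 := by norm_num
/-! #### The core bound, for `‖J‖_∞ ≤ 1` -/

lemma entropy_nonneg (h0 : 0 ≤ ρ) (h1 : ρ ≤ 1) (f : Cfg d n → ℝ)
    (hf : IsDensity d n ρ f) : 0 ≤ entropy d n ρ f := by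
  have hpt : ∀ η : Cfg d n, f η - 1 ≤ f η * Real.log (f η) :=
    fun η => sub_one_le_mul_log (hf.1 η)
  have hmono := expect_mono h0 h1 hpt
  have hsub : expect d n ρ (fun η => f η - 1) = 0 := by
    rw [expect_sub f (fun _ => 1), expect_one, hf.2, sub_self]
  unfold entropy
  calc (0 : ℝ) = expect d n ρ (fun η => f η - 1) := hsub.symm
    _ ≤ expect d n ρ (fun η => f η * Real.log (f η)) := hmono

lemma core (d : ℕ) (h : CylFun d) (n : ℕ) [NeZero n] (ρ : ℝ) (h0 : 0 < ρ) (h1 : ρ < 1)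
    (hfit : FitsCube d h.supp n) (J : Torus d n → ℝ) (hJ : ∀ x, |J x| ≤ 1)
    (f : Cfg d n → ℝ) (hf : IsDensity d n ρ f) :
    expect d n ρ (fun η =>
        ((Real.sqrt ((n : ℝ) ^ d))⁻¹ * ∑ x : Torus d n, J x * (cylAt h x η - h.tilde ρ)) ^ 2
          * f η)
      ≤ (8 * Real.exp 1 * Mh h ^ 2 * ((h.supp.card ^ 2 + 1 : ℕ) : ℝ) ^ 2)
          * (entropy d n ρ f + 1) := by
  classical
  have h0' : 0 ≤ ρ := h0.le
  have h1' : ρ ≤ 1 := h1.le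
  have hM : 0 < Mh h := Mh_pos h
  have hexppos := Real.exp_pos 1
  set K : ℕ := h.supp.card ^ 2 + 1 with hKdef
  have hK : 0 < K := Nat.succ_pos _
  have hKR : (0 : ℝ) < (K : ℝ) := by exact_mod_cast hK
  -- the dependency graph
  set adj : Torus d n → Torus d n → Prop := fun x y => x ≠ y ∧
    ∃ z ∈ h.supp, ∃ z' ∈ h.supp, x + toTorus z = y + toTorus z' with hadjdef
  haveI : DecidableRel adj := fun x y => Classical.propDecidable _
  have hsym : ∀ x y, adj x y → adj y x := by
    rintro x y ⟨hxy, z, hz, z', hz', heq⟩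
    exact ⟨hxy.symm, z', hz', z, hz, heq.symm⟩
  have hirr : ∀ x, ¬ adj x x := fun x hx => hx.1 rfl
  have hdeg : ∀ v : Torus d n,
      ((Finset.univ : Finset (Torus d n)).filter (fun y => adj v y)).card < K := by
    intro v
    have hsub : (Finset.univ : Finset (Torus d n)).filter (fun y => adj v y) ⊆
        (h.supp ×ˢ h.supp).image (fun p => v + toTorus p.1 - toTorus p.2) := by
      intro y hy
      rw [Finset.mem_filter] at hy
      obtain ⟨-, -, z, hz, z', hz', heq⟩ := hy
      refine Finset.mem_image.2 ⟨(z, z'), Finset.mem_product.2 ⟨hz, hz'⟩, ?_⟩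
      rw [sub_eq_iff_eq_add]
      exact heq
    calc ((Finset.univ : Finset (Torus d n)).filter (fun y => adj v y)).card
        ≤ ((h.supp ×ˢ h.supp).image (fun p => v + toTorus p.1 - toTorus p.2)).card :=
          Finset.card_le_card hsub
      _ ≤ (h.supp ×ˢ h.supp).card := Finset.card_image_le
      _ = h.supp.card ^ 2 := by rw [Finset.card_product, sq]
      _ < K := Nat.lt_succ_self _
  obtain ⟨c, hc⟩ := exists_coloring adj hsym hirr K hK hdeg
  -- normalized coefficients
  set a : Torus d n → ℝ := fun x => (Real.sqrt ((n : ℝ) ^ d))⁻¹ * J x with hadef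
  have hn1 : 1 ≤ n := Nat.one_le_iff_ne_zero.2 (NeZero.ne n)
  have hnd : (0 : ℝ) < (n : ℝ) ^ d := by
    have : (0 : ℝ) < (n : ℝ) := by exact_mod_cast hn1
    positivity
  have hsqrtinv : ((Real.sqrt ((n : ℝ) ^ d))⁻¹) ^ 2 = ((n : ℝ) ^ d)⁻¹ := by
    rw [inv_pow, Real.sq_sqrt hnd.le]
  have hcard : ((Fintype.card (Torus d n)) : ℝ) = (n : ℝ) ^ d := by
    rw [Fintype.card_fun, ZMod.card, Fintype.card_fin]
    push_cast
    ring
  have hasum : ∑ x : Torus d n, (a x) ^ 2 ≤ 1 := by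
    have hax : ∀ x, (a x) ^ 2 ≤ ((n : ℝ) ^ d)⁻¹ := by
      intro x
      have hJx : (J x) ^ 2 ≤ 1 := by
        have h1x := hJ x
        have h2x := abs_nonneg (J x)
        nlinarith [sq_abs (J x)]
      calc (a x) ^ 2 = ((Real.sqrt ((n : ℝ) ^ d))⁻¹) ^ 2 * (J x) ^ 2 := by
            rw [hadef, mul_pow]
        _ ≤ ((n : ℝ) ^ d)⁻¹ * 1 := by
            rw [hsqrtinv]
            exact mul_le_mul_of_nonneg_left hJx (by positivity)
        _ = ((n : ℝ) ^ d)⁻¹ := mul_one _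
    calc ∑ x : Torus d n, (a x) ^ 2 ≤ ∑ _x : Torus d n, ((n : ℝ) ^ d)⁻¹ :=
          Finset.sum_le_sum fun x _ => hax x
      _ = ((Fintype.card (Torus d n)) : ℝ) * ((n : ℝ) ^ d)⁻¹ := by
          rw [Finset.sum_const, nsmul_eq_mul, Finset.card_univ]
      _ = 1 := by rw [hcard]; field_simp
  -- blocks
  set Y : Fin K → Cfg d n → ℝ := fun k η =>
    ∑ x ∈ Finset.univ.filter (fun x => c x = k), a x * xi h ρ x η with hYdef
  set X : Cfg d n → ℝ := fun η => ∑ x : Torus d n, a x * xi h ρ x η with hXdef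
  have hXY : ∀ η, X η = ∑ k : Fin K, Y k η := by
    intro η
    rw [hXdef]
    exact (Finset.sum_fiberwise Finset.univ c (fun x => a x * xi h ρ x η)).symm
  have hint : ∀ η : Cfg d n,
      (Real.sqrt ((n : ℝ) ^ d))⁻¹ * ∑ x : Torus d n, J x * (cylAt h x η - h.tilde ρ)
        = X η := by
    intro η
    rw [hXdef, Finset.mul_sum]
    refine Finset.sum_congr rfl fun x _ => ?_
    rw [hadef]
    unfold xi
    ring
  set β : ℝ := (4 * Real.exp 1 * Mh h ^ 2)⁻¹ with hβ
  have hβpos : 0 < β := by rw [hβ]; positivity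
  set γ : ℝ := β / (K : ℝ) ^ 2 with hγ
  have hγpos : 0 < γ := by rw [hγ]; positivity
  -- per-block disjointness and sums of squares
  have hdisjk : ∀ k : Fin K, ∀ x ∈ Finset.univ.filter (fun x => c x = k),
      ∀ y ∈ Finset.univ.filter (fun x => c x = k), x ≠ y →
      Disjoint (Set.range (siteMap h x)) (Set.range (siteMap h y)) := by
    intro k x hx y hy hxy
    rw [Finset.mem_filter] at hx hy
    rw [Set.disjoint_left]
    rintro p ⟨z, hz⟩ ⟨z', hz'⟩
    refine absurd (hx.2.trans hy.2.symm) (hc x y ⟨hxy, z.val, z.2, z'.val, z'.2, ?_⟩)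
    exact hz.trans hz'.symm
  have hak : ∀ k : Fin K, ∑ x ∈ Finset.univ.filter (fun x => c x = k), (a x) ^ 2 ≤ 1 := by
    intro k
    refine le_trans ?_ hasum
    exact Finset.sum_le_sum_of_subset_of_nonneg (Finset.filter_subset _ _)
      (fun x _ _ => sq_nonneg _)
  -- exponential bound
  have hexp3 : expect d n ρ (fun η => Real.exp (γ * X η ^ 2)) ≤ 3 := by
    have hptexp : ∀ η, Real.exp (γ * X η ^ 2)
        ≤ ∑ k : Fin K, ((K : ℝ))⁻¹ * Real.exp (β * Y k η ^ 2) := by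
      intro η
      have hXsq : X η ^ 2 ≤ (K : ℝ) * ∑ k : Fin K, Y k η ^ 2 := by
        rw [hXY η]
        have hcs := sq_sum_le_card_mul_sum_sq (s := (Finset.univ : Finset (Fin K)))
          (f := fun k => Y k η)
        simpa [Finset.card_univ, Fintype.card_fin] using hcs
      have h2 : γ * X η ^ 2 ≤ ∑ k : Fin K, ((K : ℝ))⁻¹ * (β * Y k η ^ 2) := by
        calc γ * X η ^ 2 ≤ γ * ((K : ℝ) * ∑ k : Fin K, Y k η ^ 2) :=
              mul_le_mul_of_nonneg_left hXsq hγpos.le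
          _ = ∑ k : Fin K, ((K : ℝ))⁻¹ * (β * Y k η ^ 2) := by
              rw [Finset.mul_sum, Finset.mul_sum]
              refine Finset.sum_congr rfl fun k _ => ?_
              rw [hγ]
              field_simp
      have hjensen : Real.exp (∑ k : Fin K, ((K : ℝ))⁻¹ * (β * Y k η ^ 2))
          ≤ ∑ k : Fin K, ((K : ℝ))⁻¹ * Real.exp (β * Y k η ^ 2) := by
        have hw : ∀ k ∈ (Finset.univ : Finset (Fin K)), (0 : ℝ) ≤ ((K : ℝ))⁻¹ :=
          fun k _ => by positivity
        have hw1 : ∑ _k : Fin K, ((K : ℝ))⁻¹ = 1 := by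
          rw [Finset.sum_const, nsmul_eq_mul, Finset.card_univ, Fintype.card_fin]
          field_simp
        have hmem : ∀ k ∈ (Finset.univ : Finset (Fin K)),
            β * Y k η ^ 2 ∈ (Set.univ : Set ℝ) := fun k _ => Set.mem_univ _
        have := convexOn_exp.map_sum_le hw hw1 hmem
        simpa [smul_eq_mul] using this
      calc Real.exp (γ * X η ^ 2) ≤ Real.exp (∑ k : Fin K, ((K : ℝ))⁻¹ * (β * Y k η ^ 2)) :=
            Real.exp_le_exp.2 h2
        _ ≤ ∑ k : Fin K, ((K : ℝ))⁻¹ * Real.exp (β * Y k η ^ 2) := hjensen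
    calc expect d n ρ (fun η => Real.exp (γ * X η ^ 2))
        ≤ expect d n ρ (fun η => ∑ k : Fin K, ((K : ℝ))⁻¹ * Real.exp (β * Y k η ^ 2)) :=
          expect_mono h0' h1' hptexp
      _ = ∑ k : Fin K, ((K : ℝ))⁻¹
            * expect d n ρ (fun η => Real.exp (β * Y k η ^ 2)) := by
          rw [expect_sum]
          exact Finset.sum_congr rfl fun k _ => expect_smul _ _
      _ ≤ ∑ _k : Fin K, ((K : ℝ))⁻¹ * 3 := by
          refine Finset.sum_le_sum fun k _ => ?_
          refine mul_le_mul_of_nonneg_left ?_ (by positivity)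
          exact expsq_block h h0' h1' hfit _ a (hdisjk k) (hak k)
      _ = 3 := by
          rw [Finset.sum_const, nsmul_eq_mul, Finset.card_univ, Fintype.card_fin]
          field_simp
  -- entropy inequality
  have hE1 : γ * expect d n ρ (fun η => X η ^ 2 * f η) ≤ entropy d n ρ f + 2 := by
    have hpt : ∀ η, γ * (X η ^ 2 * f η)
        ≤ (f η * Real.log (f η) - f η) + Real.exp (γ * X η ^ 2) := by
      intro η
      have hy := young_ineq (u := f η) (v := γ * X η ^ 2) (hf.1 η)
      calc γ * (X η ^ 2 * f η) = f η * (γ * X η ^ 2) := by ring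
        _ ≤ f η * Real.log (f η) - f η + Real.exp (γ * X η ^ 2) := hy
    calc γ * expect d n ρ (fun η => X η ^ 2 * f η)
        = expect d n ρ (fun η => γ * (X η ^ 2 * f η)) := (expect_smul _ _).symm
      _ ≤ expect d n ρ (fun η => (f η * Real.log (f η) - f η)
            + Real.exp (γ * X η ^ 2)) := expect_mono h0' h1' hpt
      _ = (entropy d n ρ f - 1) + expect d n ρ (fun η => Real.exp (γ * X η ^ 2)) := by
          rw [expect_add, expect_sub, hf.2]
          rfl
      _ ≤ entropy d n ρ f + 2 := by linarith [hexp3]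
  have hHnn : 0 ≤ entropy d n ρ f := entropy_nonneg h0' h1' f hf
  have hfinal : expect d n ρ (fun η => X η ^ 2 * f η)
      ≤ (8 * Real.exp 1 * Mh h ^ 2 * ((K : ℕ) : ℝ) ^ 2) * (entropy d n ρ f + 1) := by
    have hEle : expect d n ρ (fun η => X η ^ 2 * f η) ≤ (entropy d n ρ f + 2) / γ := by
      rw [le_div_iff₀ hγpos]
      calc expect d n ρ (fun η => X η ^ 2 * f η) * γ
          = γ * expect d n ρ (fun η => X η ^ 2 * f η) := by ring
        _ ≤ entropy d n ρ f + 2 := hE1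
    have hγinv : γ⁻¹ = 4 * Real.exp 1 * Mh h ^ 2 * ((K : ℕ) : ℝ) ^ 2 := by
      rw [hγ, hβ]
      field_simp
    calc expect d n ρ (fun η => X η ^ 2 * f η) ≤ (entropy d n ρ f + 2) / γ := hEle
      _ = γ⁻¹ * (entropy d n ρ f + 2) := by rw [div_eq_mul_inv]; ring
      _ ≤ γ⁻¹ * (2 * (entropy d n ρ f + 1)) := by
          refine mul_le_mul_of_nonneg_left (by linarith) (by positivity)
      _ = (8 * Real.exp 1 * Mh h ^ 2 * ((K : ℕ) : ℝ) ^ 2) * (entropy d n ρ f + 1) := by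
          rw [hγinv]
          ring
  have hrwint : (fun η : Cfg d n =>
      ((Real.sqrt ((n : ℝ) ^ d))⁻¹ * ∑ x : Torus d n, J x * (cylAt h x η - h.tilde ρ)) ^ 2
        * f η) = fun η => X η ^ 2 * f η := by
    funext η
    rw [hint η]
  rw [hrwint]
  exact hfinal

end CFSB

theorem cylinder_field_square_bound :
    ∀ d : ℕ, 1 ≤ d → ∀ h : CylFun d,
    ∃ C₀ : ℝ, ∀ (n : ℕ) [NeZero n], ∀ ρ : ℝ, 0 < ρ → ρ < 1 →
      FitsCube d h.supp n →
      ∀ J : Torus d n → ℝ, ∀ f : Cfg d n → ℝ, IsDensity d n ρ f →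
        expect d n ρ (fun η =>
          ((Real.sqrt ((n : ℝ) ^ d))⁻¹ *
            ∑ x : Torus d n, J x * (cylAt h x η - h.tilde ρ)) ^ 2 * f η)
          ≤ C₀ * (entropy d n ρ f + 1) * supNorm J ^ 2 := by
  intro d _hd h
  refine ⟨8 * Real.exp 1 * CFSB.Mh h ^ 2 * ((h.supp.card ^ 2 + 1 : ℕ) : ℝ) ^ 2, ?_⟩
  intro n _inst ρ h0 h1 hfit J f hf
  set C₀ : ℝ := 8 * Real.exp 1 * CFSB.Mh h ^ 2 * ((h.supp.card ^ 2 + 1 : ℕ) : ℝ) ^ 2 with hC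
  have hMpos := CFSB.Mh_pos h
  have hexppos := Real.exp_pos 1
  have hC₀ : 0 ≤ C₀ := by rw [hC]; positivity
  have hne : Nonempty (Torus d n) := ⟨fun _ => 0⟩
  have hbdd : BddAbove (Set.range fun x : Torus d n => |J x|) :=
    Set.Finite.bddAbove (Set.finite_range _)
  have hle : ∀ x, |J x| ≤ supNorm J := fun x => le_ciSup hbdd x
  have hs0 : 0 ≤ supNorm J :=
    le_trans (abs_nonneg _) (hle (Classical.arbitrary _))
  have hHnn : 0 ≤ entropy d n ρ f := CFSB.entropy_nonneg h0.le h1.le f hf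
  rcases eq_or_lt_of_le hs0 with hs | hs
  · -- `‖J‖_∞ = 0`
    have hJ0 : ∀ x, J x = 0 := by
      intro x
      have := hle x
      rw [← hs] at this
      have := le_antisymm this (abs_nonneg _)
      exact abs_eq_zero.1 this
    have hzero : (fun η : Cfg d n =>
        ((Real.sqrt ((n : ℝ) ^ d))⁻¹ *
          ∑ x : Torus d n, J x * (cylAt h x η - h.tilde ρ)) ^ 2 * f η)
        = fun _ => (0 : ℝ) := by
      funext η
      rw [Finset.sum_eq_zero (fun x _ => by rw [hJ0 x, zero_mul])]
      simp
    rw [hzero, CFSB.expect_const, ← hs]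
    have : C₀ * (entropy d n ρ f + 1) * (0:ℝ) ^ 2 = 0 := by ring
    rw [this]
  · -- `‖J‖_∞ > 0`: rescale
    set s : ℝ := supNorm J with hsdef
    have hsne : s ≠ 0 := hs.ne'
    have hJ' : ∀ x, |s⁻¹ * J x| ≤ 1 := by
      intro x
      rw [abs_mul, abs_inv, abs_of_pos hs]
      calc s⁻¹ * |J x| ≤ s⁻¹ * s :=
            mul_le_mul_of_nonneg_left (hle x) (inv_nonneg.2 hs0)
        _ = 1 := inv_mul_cancel₀ hsne
    have hcore := CFSB.core d h n ρ h0 h1 hfit (fun x => s⁻¹ * J x) hJ' f hf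
    have hrel : ∀ η : Cfg d n,
        ((Real.sqrt ((n : ℝ) ^ d))⁻¹ *
          ∑ x : Torus d n, J x * (cylAt h x η - h.tilde ρ)) ^ 2 * f η
        = s ^ 2 * (((Real.sqrt ((n : ℝ) ^ d))⁻¹ *
            ∑ x : Torus d n, (s⁻¹ * J x) * (cylAt h x η - h.tilde ρ)) ^ 2 * f η) := by
      intro η
      have hsum : ∑ x : Torus d n, (s⁻¹ * J x) * (cylAt h x η - h.tilde ρ)
          = s⁻¹ * ∑ x : Torus d n, J x * (cylAt h x η - h.tilde ρ) := by
        rw [Finset.mul_sum]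
        exact Finset.sum_congr rfl fun x _ => by ring
      rw [hsum]
      have hss : s ^ 2 * (s⁻¹) ^ 2 = 1 := by
        field_simp
      calc ((Real.sqrt ((n : ℝ) ^ d))⁻¹ *
            ∑ x : Torus d n, J x * (cylAt h x η - h.tilde ρ)) ^ 2 * f η
          = (s ^ 2 * (s⁻¹) ^ 2) * (((Real.sqrt ((n : ℝ) ^ d))⁻¹ *
              ∑ x : Torus d n, J x * (cylAt h x η - h.tilde ρ)) ^ 2 * f η) := by
            rw [hss, one_mul]
        _ = s ^ 2 * (((Real.sqrt ((n : ℝ) ^ d))⁻¹ * (s⁻¹ *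
              ∑ x : Torus d n, J x * (cylAt h x η - h.tilde ρ))) ^ 2 * f η) := by
            ring
    calc expect d n ρ (fun η =>
          ((Real.sqrt ((n : ℝ) ^ d))⁻¹ *
            ∑ x : Torus d n, J x * (cylAt h x η - h.tilde ρ)) ^ 2 * f η)
        = expect d n ρ (fun η => s ^ 2 * (((Real.sqrt ((n : ℝ) ^ d))⁻¹ *
            ∑ x : Torus d n, (s⁻¹ * J x) * (cylAt h x η - h.tilde ρ)) ^ 2 * f η)) := by
          apply congrArg
          funext η
          exact hrel η
      _ = s ^ 2 * expect d n ρ (fun η => ((Real.sqrt ((n : ℝ) ^ d))⁻¹ *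
            ∑ x : Torus d n, (s⁻¹ * J x) * (cylAt h x η - h.tilde ρ)) ^ 2 * f η) :=
          CFSB.expect_smul _ _
      _ ≤ s ^ 2 * (C₀ * (entropy d n ρ f + 1)) := by
          refine mul_le_mul_of_nonneg_left ?_ (by positivity)
          exact hcore
      _ = C₀ * (entropy d n ρ f + 1) * s ^ 2 := by ring
end

section
/- Assume the gradient condition: for each 1 ≤ j ≤ d there are cylinder functions h_{j,k}, 1 ≤ k ≤ d, with c_j(η)(η_{e_j} − η_0) = Σ_{k=1}^d { (τ_{e_k} h_{j,k})(η) − h_{j,k}(η) } for all η. Then for every function F : 𝕋^d → ℝ on the continuous torus and every η ∈ Ω_n, (L_n X^n(F))(η) = (a_n n^d)^{−1/2} Σ_{j,k=1}^d Σ_{x∈T^d_n} { h_{j,k}(τ_x η) − ~h_{j,k}(ρ) } (Δ^n_{j,k} F)(x/n) + (a_n/n²)(a_n n^d)^{−1/2} Σ_{x∈T^d_n} (η_x − ρ) (Δ_n F)(x/n), where (Δ^n_{j,k}F)(x/n) = n² { F((x+e_j)/n) − F(x/n) − F((x+e_j−e_k)/n) + F((x−e_k)/n) } and Δ_n F = Σ_{j=1}^d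 Δ^n_{j,j} F. -/
open Finset

/-- The point `x/n` of the continuous torus `𝕋^d` associated to `x ∈ T^d_n`. -/
noncomputable def embedT (d n : ℕ) [NeZero n] (x : Torus d n) : Fin d → AddCircle (1 : ℝ) :=
  fun i => (↑(((x i).val : ℝ) / (n : ℝ)) : AddCircle (1 : ℝ))

/-- The density fluctuation field `X^n(F)(η) = (a_n n^d)^{-1/2} Σ_x F(x/n)(η_x - ρ)`. -/
noncomputable def fluctField (d n : ℕ) [NeZero n] (ρ a : ℝ)
    (F : (Fin d → AddCircle (1 : ℝ)) → ℝ) (η : Cfg d n) : ℝ :=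
  (Real.sqrt (a * (n : ℝ) ^ d))⁻¹ * ∑ x : Torus d n, F (embedT d n x) * (cval η x - ρ)

/-- The discrete second difference `(Δ^n_{j,k} F)(x/n)`. -/
noncomputable def discLap (d n : ℕ) [NeZero n] (j k : Fin d)
    (F : (Fin d → AddCircle (1 : ℝ)) → ℝ) (x : Torus d n) : ℝ :=
  (n : ℝ) ^ 2 * (F (embedT d n (x + unitT d n j)) - F (embedT d n x)
    - F (embedT d n (x + unitT d n j - unitT d n k)) + F (embedT d n (x - unitT d n k)))

section AuxLemmas

variable {d n : ℕ} [NeZero n]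

lemma sum_shiftT (g : Torus d n → ℝ) (t : Torus d n) :
    ∑ x : Torus d n, g (x + t) = ∑ x : Torus d n, g x :=
  Fintype.sum_equiv (Equiv.addRight t) _ _ (fun _ => rfl)

lemma toTorus_add (y z : Fin d → ℤ) :
    (toTorus (y + z) : Torus d n) = toTorus y + toTorus z := by
  funext i
  simp [toTorus]

lemma toTorus_zero : (toTorus (0 : Fin d → ℤ) : Torus d n) = 0 := by
  funext i; simp [toTorus]

lemma toTorus_unit (j : Fin d) : (toTorus (unitZ d j) : Torus d n) = unitT d n j := by
  funext i
  simp only [toTorus, unitZ, unitT]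
  split <;> simp

lemma cyl_shift (g : CylFun d) (x : Torus d n) (y : Fin d → ℤ) (η : Cfg d n) :
    g.toFun (zshift y (liftCfg (shiftCfg x η))) = cylAt g (x + toTorus y) η := by
  unfold cylAt
  congr 1
  funext z
  show η (x + toTorus (y + z)) = η (x + toTorus y + toTorus z)
  rw [toTorus_add, add_assoc]

lemma zval_lift (η : Cfg d n) (x : Torus d n) (z : Fin d → ℤ) :
    zval (liftCfg (shiftCfg x η)) z = cval η (x + toTorus z) := rfl

lemma grad_torus (c : Fin d → CylFun d) (h : Fin d → Fin d → CylFun d)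
    (hgrad : ∀ (j : Fin d) (ζ : ZCfg d),
      (c j).toFun ζ * (zval ζ (unitZ d j) - zval ζ 0)
        = ∑ k : Fin d, ((h j k).toFun (zshift (unitZ d k) ζ) - (h j k).toFun ζ))
    (j : Fin d) (x : Torus d n) (η : Cfg d n) :
    cylAt (c j) x η * (cval η (x + unitT d n j) - cval η x)
      = ∑ k : Fin d, (cylAt (h j k) (x + unitT d n k) η - cylAt (h j k) x η) := by
  have H := hgrad j (liftCfg (shiftCfg x η))
  simp only [zval_lift, cyl_shift, toTorus_unit, toTorus_zero, add_zero] at H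
  exact H

lemma fluct_swap (ρ a : ℝ) (F : (Fin d → AddCircle (1 : ℝ)) → ℝ) (η : Cfg d n)
    (x y : Torus d n) :
    fluctField d n ρ a F (swapCfg x y η) - fluctField d n ρ a F η
      = (Real.sqrt (a * (n : ℝ) ^ d))⁻¹ *
          ((F (embedT d n y) - F (embedT d n x)) * (cval η x - cval η y)) := by
  unfold fluctField
  rw [← mul_sub, ← Finset.sum_sub_distrib]
  congr 1
  have hvan : ∀ z ∈ (Finset.univ : Finset (Torus d n)),
      z ∉ ({x, y} : Finset (Torus d n)) →
      F (embedT d n z) * (cval (swapCfg x y η) z - ρ)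
        - F (embedT d n z) * (cval η z - ρ) = 0 := by
    intro z _ hz
    simp only [Finset.mem_insert, Finset.mem_singleton, not_or] at hz
    have hcfg : swapCfg x y η z = η z := by simp [swapCfg, hz.1, hz.2]
    simp [cval, hcfg]
  rw [← Finset.sum_subset (Finset.subset_univ ({x, y} : Finset (Torus d n))) hvan]
  by_cases hxy : x = y
  · subst hxy
    have hsw : swapCfg x x η = η := by
      funext z; by_cases hzx : z = x <;> simp [swapCfg, hzx]
    rw [hsw]; simp
  · rw [Finset.sum_pair hxy]
    have hx : cval (swapCfg x y η) x = cval η y := by simp [cval, swapCfg]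
    have hy : cval (swapCfg x y η) y = cval η x := by
      simp [cval, swapCfg, Ne.symm hxy]
    rw [hx, hy]; ring

lemma fluct_flip (ρ a : ℝ) (F : (Fin d → AddCircle (1 : ℝ)) → ℝ) (η : Cfg d n)
    (x : Torus d n) :
    fluctField d n ρ a F (flipCfg x η) - fluctField d n ρ a F η
      = (Real.sqrt (a * (n : ℝ) ^ d))⁻¹ *
          (F (embedT d n x) * (1 - 2 * cval η x)) := by
  unfold fluctField
  rw [← mul_sub, ← Finset.sum_sub_distrib]
  congr 1
  have hvan : ∀ z ∈ (Finset.univ : Finset (Torus d n)),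
      z ∉ ({x} : Finset (Torus d n)) →
      F (embedT d n z) * (cval (flipCfg x η) z - ρ)
        - F (embedT d n z) * (cval η z - ρ) = 0 := by
    intro z _ hz
    rw [Finset.mem_singleton] at hz
    have hcfg : flipCfg x η z = η z := Function.update_of_ne hz _ _
    simp [cval, hcfg]
  rw [← Finset.sum_subset (Finset.subset_univ ({x} : Finset (Torus d n))) hvan,
    Finset.sum_singleton]
  have hflip : cval (flipCfg x η) x = 1 - cval η x := by
    cases hx : η x <;> simp [cval, flipCfg, hx]
  rw [hflip]; ring

lemma cval_sq' (η : Cfg d n) (y x : Torus d n) :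
    (cval η y - cval η x) ^ 2 * (1 - 2 * cval η x) = cval η y - cval η x := by
  simp only [cval]
  cases η y <;> cases η x <;> norm_num

end AuxLemmas

/-- computation of `L_n X^n(F)` under the gradient condition. -/
theorem generator_on_fluctuation_field
    (d n : ℕ) [NeZero n] (hd : 1 ≤ d) (ρ : ℝ) (hρ0 : 0 < ρ) (hρ1 : ρ < 1)
    (a : ℝ) (ha : 0 < a) (c : Fin d → CylFun d)
    (hcind0 : ∀ j η, (c j).toFun (zflip 0 η) = (c j).toFun η)
    (hcinde : ∀ j η, (c j).toFun (zflip (unitZ d j) η) = (c j).toFun η)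
    (hcfit : ∀ j, FitsCube d (insert 0 (insert (unitZ d j) (c j).supp)) n)
    (h : Fin d → Fin d → CylFun d)
    (hhfit : ∀ j k, FitsCube d (h j k).supp n)
    (hgrad : ∀ (j : Fin d) (η : ZCfg d),
      (c j).toFun η * (zval η (unitZ d j) - zval η 0)
        = ∑ k : Fin d, ((h j k).toFun (zshift (unitZ d k) η) - (h j k).toFun η))
    (F : (Fin d → AddCircle (1 : ℝ)) → ℝ) (η : Cfg d n) :
    (n : ℝ) ^ 2 * genS d n c (fluctField d n ρ a F) η
        + a * genV d n (fluctField d n ρ a F) η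
      = (Real.sqrt (a * (n : ℝ) ^ d))⁻¹ *
          (∑ j : Fin d, ∑ k : Fin d, ∑ x : Torus d n,
            (cylAt (h j k) x η - (h j k).tilde ρ) * discLap d n j k F x)
        + (a / (n : ℝ) ^ 2) * ((Real.sqrt (a * (n : ℝ) ^ d))⁻¹ *
            ∑ x : Torus d n, (cval η x - ρ) * ∑ j : Fin d, discLap d n j j F x) := by
  have hn : (n : ℝ) ≠ 0 := Nat.cast_ne_zero.mpr (NeZero.ne n)
  have key3 : ∀ j k : Fin d, ∑ x : Torus d n, discLap d n j k F x = 0 := by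
    intro j k
    have h1 : ∑ x : Torus d n, F (embedT d n (x + unitT d n j))
        = ∑ x : Torus d n, F (embedT d n x) :=
      sum_shiftT (fun x => F (embedT d n x)) _
    have h2 : ∑ x : Torus d n, F (embedT d n (x + unitT d n j - unitT d n k))
        = ∑ x : Torus d n, F (embedT d n x) := by
      have hs := sum_shiftT (fun x => F (embedT d n x)) (unitT d n j - unitT d n k)
      calc ∑ x : Torus d n, F (embedT d n (x + unitT d n j - unitT d n k))
          = ∑ x : Torus d n, F (embedT d n (x + (unitT d n j - unitT d n k))) := by
            refine Finset.sum_congr rfl fun x _ => ?_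
            rw [add_sub_assoc]
        _ = _ := hs
    have h3 : ∑ x : Torus d n, F (embedT d n (x - unitT d n k))
        = ∑ x : Torus d n, F (embedT d n x) := by
      have hs := sum_shiftT (fun x => F (embedT d n x)) (-(unitT d n k))
      calc ∑ x : Torus d n, F (embedT d n (x - unitT d n k))
          = ∑ x : Torus d n, F (embedT d n (x + -(unitT d n k))) := by
            refine Finset.sum_congr rfl fun x _ => ?_
            rw [sub_eq_add_neg]
        _ = _ := hs
    simp only [discLap]
    rw [← Finset.mul_sum, Finset.sum_add_distrib, Finset.sum_sub_distrib,
      Finset.sum_sub_distrib, h1, h2, h3]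
    ring
  have key1 : (n : ℝ) ^ 2 * genS d n c (fluctField d n ρ a F) η
      = (Real.sqrt (a * (n : ℝ) ^ d))⁻¹ *
          ∑ j : Fin d, ∑ k : Fin d, ∑ x : Torus d n,
            cylAt (h j k) x η * discLap d n j k F x := by
    have e1 : genS d n c (fluctField d n ρ a F) η
        = ∑ x : Torus d n, ∑ j : Fin d,
            (Real.sqrt (a * (n : ℝ) ^ d))⁻¹ *
              ((F (embedT d n (x + unitT d n j)) - F (embedT d n x)) *
                ∑ k : Fin d,
                  (cylAt (h j k) x η - cylAt (h j k) (x + unitT d n k) η)) := by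
      unfold genS
      refine Finset.sum_congr rfl fun x _ => Finset.sum_congr rfl fun j _ => ?_
      have hg := grad_torus c h hgrad j x η
      have hsum : ∑ k : Fin d,
            (cylAt (h j k) x η - cylAt (h j k) (x + unitT d n k) η)
          = cylAt (c j) x η * (cval η x - cval η (x + unitT d n j)) := by
        have hneg : ∑ k : Fin d,
              (cylAt (h j k) x η - cylAt (h j k) (x + unitT d n k) η)
            = -∑ k : Fin d,
                (cylAt (h j k) (x + unitT d n k) η - cylAt (h j k) x η) := by
          rw [← Finset.sum_neg_distrib]
          exact Finset.sum_congr rfl fun k _ => (neg_sub _ _).symm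
        rw [hneg, ← hg]; ring
      rw [fluct_swap, hsum]
      ring
    rw [e1]
    calc (n : ℝ) ^ 2 * ∑ x : Torus d n, ∑ j : Fin d,
          (Real.sqrt (a * (n : ℝ) ^ d))⁻¹ *
            ((F (embedT d n (x + unitT d n j)) - F (embedT d n x)) *
              ∑ k : Fin d, (cylAt (h j k) x η - cylAt (h j k) (x + unitT d n k) η))
        = ∑ x : Torus d n, ∑ j : Fin d, ∑ k : Fin d,
            ((n : ℝ) ^ 2 * (Real.sqrt (a * (n : ℝ) ^ d))⁻¹ *
                ((F (embedT d n (x + unitT d n j)) - F (embedT d n x)) *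
                  cylAt (h j k) x η)
              - (n : ℝ) ^ 2 * (Real.sqrt (a * (n : ℝ) ^ d))⁻¹ *
                ((F (embedT d n (x + unitT d n j)) - F (embedT d n x)) *
                  cylAt (h j k) (x + unitT d n k) η)) := by
          rw [Finset.mul_sum]
          refine Finset.sum_congr rfl fun x _ => ?_
          rw [Finset.mul_sum]
          refine Finset.sum_congr rfl fun j _ => ?_
          rw [show (n : ℝ) ^ 2 * ((Real.sqrt (a * (n : ℝ) ^ d))⁻¹ *
              ((F (embedT d n (x + unitT d n j)) - F (embedT d n x)) *
                ∑ k : Fin d, (cylAt (h j k) x η - cylAt (h j k) (x + unitT d n k) η)))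
            = ((n : ℝ) ^ 2 * (Real.sqrt (a * (n : ℝ) ^ d))⁻¹ *
                (F (embedT d n (x + unitT d n j)) - F (embedT d n x))) *
              ∑ k : Fin d, (cylAt (h j k) x η - cylAt (h j k) (x + unitT d n k) η)
            from by ring, Finset.mul_sum]
          exact Finset.sum_congr rfl fun k _ => by ring
      _ = ∑ j : Fin d, ∑ x : Torus d n, ∑ k : Fin d,
            ((n : ℝ) ^ 2 * (Real.sqrt (a * (n : ℝ) ^ d))⁻¹ *
                ((F (embedT d n (x + unitT d n j)) - F (embedT d n x)) *
                  cylAt (h j k) x η)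
              - (n : ℝ) ^ 2 * (Real.sqrt (a * (n : ℝ) ^ d))⁻¹ *
                ((F (embedT d n (x + unitT d n j)) - F (embedT d n x)) *
                  cylAt (h j k) (x + unitT d n k) η)) := Finset.sum_comm
      _ = ∑ j : Fin d, ∑ k : Fin d, ∑ x : Torus d n,
            ((n : ℝ) ^ 2 * (Real.sqrt (a * (n : ℝ) ^ d))⁻¹ *
                ((F (embedT d n (x + unitT d n j)) - F (embedT d n x)) *
                  cylAt (h j k) x η)
              - (n : ℝ) ^ 2 * (Real.sqrt (a * (n : ℝ) ^ d))⁻¹ *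
                ((F (embedT d n (x + unitT d n j)) - F (embedT d n x)) *
                  cylAt (h j k) (x + unitT d n k) η)) :=
        Finset.sum_congr rfl fun j _ => Finset.sum_comm
      _ = ∑ j : Fin d, ∑ k : Fin d,
            ((∑ x : Torus d n, (n : ℝ) ^ 2 * (Real.sqrt (a * (n : ℝ) ^ d))⁻¹ *
                ((F (embedT d n (x + unitT d n j)) - F (embedT d n x)) *
                  cylAt (h j k) x η))
              - ∑ x : Torus d n, (n : ℝ) ^ 2 * (Real.sqrt (a * (n : ℝ) ^ d))⁻¹ *
                ((F (embedT d n (x + unitT d n j)) - F (embedT d n x)) *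
                  cylAt (h j k) (x + unitT d n k) η)) :=
        Finset.sum_congr rfl fun j _ => Finset.sum_congr rfl fun k _ =>
          Finset.sum_sub_distrib _ _
      _ = ∑ j : Fin d, ∑ k : Fin d,
            ((∑ x : Torus d n, (n : ℝ) ^ 2 * (Real.sqrt (a * (n : ℝ) ^ d))⁻¹ *
                ((F (embedT d n (x + unitT d n j)) - F (embedT d n x)) *
                  cylAt (h j k) x η))
              - ∑ x : Torus d n, (n : ℝ) ^ 2 * (Real.sqrt (a * (n : ℝ) ^ d))⁻¹ *
                ((F (embedT d n (x - unitT d n k + unitT d n j))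
                    - F (embedT d n (x - unitT d n k))) *
                  cylAt (h j k) x η)) := by
          refine Finset.sum_congr rfl fun j _ => Finset.sum_congr rfl fun k _ => ?_
          have hs := sum_shiftT (fun x : Torus d n =>
            (n : ℝ) ^ 2 * (Real.sqrt (a * (n : ℝ) ^ d))⁻¹ *
              ((F (embedT d n (x - unitT d n k + unitT d n j))
                  - F (embedT d n (x - unitT d n k))) *
                cylAt (h j k) x η)) (unitT d n k)
          simp only [add_sub_cancel_right] at hs
          rw [← hs]
      _ = ∑ j : Fin d, ∑ k : Fin d, (Real.sqrt (a * (n : ℝ) ^ d))⁻¹ *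
            ∑ x : Torus d n, cylAt (h j k) x η * discLap d n j k F x := by
          refine Finset.sum_congr rfl fun j _ => Finset.sum_congr rfl fun k _ => ?_
          rw [← Finset.sum_sub_distrib, Finset.mul_sum]
          refine Finset.sum_congr rfl fun x _ => ?_
          simp only [discLap]
          rw [sub_add_eq_add_sub]
          ring
      _ = (Real.sqrt (a * (n : ℝ) ^ d))⁻¹ *
            ∑ j : Fin d, ∑ k : Fin d, ∑ x : Torus d n,
              cylAt (h j k) x η * discLap d n j k F x := by
          rw [Finset.mul_sum]
          exact Finset.sum_congr rfl fun j _ => (Finset.mul_sum _ _ _).symm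
  have shA : ∀ j : Fin d, ∑ x : Torus d n, F (embedT d n x) * cval η (x + unitT d n j)
      = ∑ x : Torus d n, F (embedT d n (x - unitT d n j)) * cval η x := by
    intro j
    have hs := sum_shiftT (fun x : Torus d n =>
      F (embedT d n (x - unitT d n j)) * cval η x) (unitT d n j)
    simpa [add_sub_cancel_right] using hs
  have shB : ∀ j : Fin d, ∑ x : Torus d n, F (embedT d n x) * cval η (x - unitT d n j)
      = ∑ x : Torus d n, F (embedT d n (x + unitT d n j)) * cval η x := by
    intro j
    have hs := sum_shiftT (fun x : Torus d n =>
      F (embedT d n (x + unitT d n j)) * cval η x) (-unitT d n j)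
    simpa [← sub_eq_add_neg, neg_add_cancel_right] using hs
  have key2 : a * genV d n (fluctField d n ρ a F) η
      = (a / (n : ℝ) ^ 2) * ((Real.sqrt (a * (n : ℝ) ^ d))⁻¹ *
          ∑ x : Torus d n, cval η x * ∑ j : Fin d, discLap d n j j F x) := by
    have e1V : genV d n (fluctField d n ρ a F) η
        = ∑ x : Torus d n, ∑ j : Fin d,
            (Real.sqrt (a * (n : ℝ) ^ d))⁻¹ * (F (embedT d n x) *
              ((cval η (x + unitT d n j) - cval η x)
                + (cval η (x - unitT d n j) - cval η x))) := by
      unfold genV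
      refine Finset.sum_congr rfl fun x _ => Finset.sum_congr rfl fun j _ => ?_
      rw [fluct_flip]
      have h1 := cval_sq' η (x + unitT d n j) x
      have h2 := cval_sq' η (x - unitT d n j) x
      linear_combination ((Real.sqrt (a * (n : ℝ) ^ d))⁻¹ * F (embedT d n x)) * h1
        + ((Real.sqrt (a * (n : ℝ) ^ d))⁻¹ * F (embedT d n x)) * h2
    have R1 : (a / (n : ℝ) ^ 2) * ((Real.sqrt (a * (n : ℝ) ^ d))⁻¹ *
          ∑ x : Torus d n, cval η x * ∑ j : Fin d, discLap d n j j F x)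
        = ∑ j : Fin d,
            (a * (Real.sqrt (a * (n : ℝ) ^ d))⁻¹ *
                ∑ x : Torus d n, F (embedT d n (x - unitT d n j)) * cval η x
              + a * (Real.sqrt (a * (n : ℝ) ^ d))⁻¹ *
                ∑ x : Torus d n, F (embedT d n (x + unitT d n j)) * cval η x
              - 2 * (a * (Real.sqrt (a * (n : ℝ) ^ d))⁻¹ *
                ∑ x : Torus d n, F (embedT d n x) * cval η x)) := by
      calc (a / (n : ℝ) ^ 2) * ((Real.sqrt (a * (n : ℝ) ^ d))⁻¹ *
            ∑ x : Torus d n, cval η x * ∑ j : Fin d, discLap d n j j F x)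
          = ∑ x : Torus d n, ∑ j : Fin d,
              (a / (n : ℝ) ^ 2) * ((Real.sqrt (a * (n : ℝ) ^ d))⁻¹ *
                (cval η x * discLap d n j j F x)) := by
            conv_lhs => rw [Finset.mul_sum, Finset.mul_sum]
            refine Finset.sum_congr rfl fun x _ => ?_
            rw [show (a / (n : ℝ) ^ 2) * ((Real.sqrt (a * (n : ℝ) ^ d))⁻¹ *
                (cval η x * ∑ j : Fin d, discLap d n j j F x))
              = ((a / (n : ℝ) ^ 2) * (Real.sqrt (a * (n : ℝ) ^ d))⁻¹ * cval η x) *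
                  ∑ j : Fin d, discLap d n j j F x from by ring, Finset.mul_sum]
            exact Finset.sum_congr rfl fun j _ => by ring
        _ = ∑ j : Fin d, ∑ x : Torus d n,
              (a / (n : ℝ) ^ 2) * ((Real.sqrt (a * (n : ℝ) ^ d))⁻¹ *
                (cval η x * discLap d n j j F x)) := Finset.sum_comm
        _ = _ := by
            refine Finset.sum_congr rfl fun j _ => ?_
            calc ∑ x : Torus d n,
                  (a / (n : ℝ) ^ 2) * ((Real.sqrt (a * (n : ℝ) ^ d))⁻¹ *
                    (cval η x * discLap d n j j F x))
                = ∑ x : Torus d n,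
                    (a * (Real.sqrt (a * (n : ℝ) ^ d))⁻¹ *
                        (F (embedT d n (x - unitT d n j)) * cval η x)
                      + a * (Real.sqrt (a * (n : ℝ) ^ d))⁻¹ *
                        (F (embedT d n (x + unitT d n j)) * cval η x)
                      - 2 * (a * (Real.sqrt (a * (n : ℝ) ^ d))⁻¹ *
                        (F (embedT d n x) * cval η x))) := by
                  refine Finset.sum_congr rfl fun x _ => ?_
                  simp only [discLap, add_sub_cancel_right]
                  field_simp
                  ring
              _ = _ := by
                  rw [Finset.sum_sub_distrib, Finset.sum_add_distrib,
                    ← Finset.mul_sum, ← Finset.mul_sum, ← Finset.mul_sum,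
                    ← Finset.mul_sum]
    rw [e1V, R1]
    calc a * ∑ x : Torus d n, ∑ j : Fin d,
          (Real.sqrt (a * (n : ℝ) ^ d))⁻¹ * (F (embedT d n x) *
            ((cval η (x + unitT d n j) - cval η x)
              + (cval η (x - unitT d n j) - cval η x)))
        = ∑ x : Torus d n, ∑ j : Fin d,
            a * ((Real.sqrt (a * (n : ℝ) ^ d))⁻¹ * (F (embedT d n x) *
              ((cval η (x + unitT d n j) - cval η x)
                + (cval η (x - unitT d n j) - cval η x)))) := by
          rw [Finset.mul_sum]
          exact Finset.sum_congr rfl fun x _ => Finset.mul_sum _ _ _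
      _ = ∑ j : Fin d, ∑ x : Torus d n,
            a * ((Real.sqrt (a * (n : ℝ) ^ d))⁻¹ * (F (embedT d n x) *
              ((cval η (x + unitT d n j) - cval η x)
                + (cval η (x - unitT d n j) - cval η x)))) := Finset.sum_comm
      _ = ∑ j : Fin d,
            (a * (Real.sqrt (a * (n : ℝ) ^ d))⁻¹ *
                ∑ x : Torus d n, F (embedT d n (x - unitT d n j)) * cval η x
              + a * (Real.sqrt (a * (n : ℝ) ^ d))⁻¹ *
                ∑ x : Torus d n, F (embedT d n (x + unitT d n j)) * cval η x
              - 2 * (a * (Real.sqrt (a * (n : ℝ) ^ d))⁻¹ *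
                ∑ x : Torus d n, F (embedT d n x) * cval η x)) := by
          refine Finset.sum_congr rfl fun j _ => ?_
          calc ∑ x : Torus d n,
                a * ((Real.sqrt (a * (n : ℝ) ^ d))⁻¹ * (F (embedT d n x) *
                  ((cval η (x + unitT d n j) - cval η x)
                    + (cval η (x - unitT d n j) - cval η x))))
              = ∑ x : Torus d n,
                  (a * (Real.sqrt (a * (n : ℝ) ^ d))⁻¹ *
                      (F (embedT d n x) * cval η (x + unitT d n j))
                    + a * (Real.sqrt (a * (n : ℝ) ^ d))⁻¹ *
                      (F (embedT d n x) * cval η (x - unitT d n j))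
                    - 2 * (a * (Real.sqrt (a * (n : ℝ) ^ d))⁻¹ *
                      (F (embedT d n x) * cval η x))) :=
                Finset.sum_congr rfl fun x _ => by ring
            _ = _ := by
                rw [Finset.sum_sub_distrib, Finset.sum_add_distrib,
                  ← Finset.mul_sum, ← Finset.mul_sum, ← Finset.mul_sum,
                  ← Finset.mul_sum, shA j, shB j]
  rw [key1, key2]
  have t1 : ∑ j : Fin d, ∑ k : Fin d, ∑ x : Torus d n,
        (cylAt (h j k) x η - (h j k).tilde ρ) * discLap d n j k F x
      = ∑ j : Fin d, ∑ k : Fin d, ∑ x : Torus d n,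
          cylAt (h j k) x η * discLap d n j k F x := by
    refine Finset.sum_congr rfl fun j _ => Finset.sum_congr rfl fun k _ => ?_
    calc ∑ x : Torus d n, (cylAt (h j k) x η - (h j k).tilde ρ) * discLap d n j k F x
        = ∑ x : Torus d n, (cylAt (h j k) x η * discLap d n j k F x
            - (h j k).tilde ρ * discLap d n j k F x) :=
          Finset.sum_congr rfl fun x _ => by ring
      _ = ∑ x : Torus d n, cylAt (h j k) x η * discLap d n j k F x
            - (h j k).tilde ρ * ∑ x : Torus d n, discLap d n j k F x := by
          rw [Finset.sum_sub_distrib, ← Finset.mul_sum]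
      _ = _ := by rw [key3 j k, mul_zero, sub_zero]
  have t2 : ∑ x : Torus d n, (cval η x - ρ) * ∑ j : Fin d, discLap d n j j F x
      = ∑ x : Torus d n, cval η x * ∑ j : Fin d, discLap d n j j F x := by
    have hz : ∑ x : Torus d n, ∑ j : Fin d, discLap d n j j F x = 0 := by
      rw [Finset.sum_comm]
      exact Finset.sum_eq_zero fun j _ => key3 j j
    calc ∑ x : Torus d n, (cval η x - ρ) * ∑ j : Fin d, discLap d n j j F x
        = ∑ x : Torus d n, (cval η x * ∑ j : Fin d, discLap d n j j F x
            - ρ * ∑ j : Fin d, discLap d n j j F x) :=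
          Finset.sum_congr rfl fun x _ => by ring
      _ = ∑ x : Torus d n, cval η x * ∑ j : Fin d, discLap d n j j F x
            - ρ * ∑ x : Torus d n, ∑ j : Fin d, discLap d n j j F x := by
          rw [Finset.sum_sub_distrib, ← Finset.mul_sum]
      _ = _ := by rw [hz, mul_zero, sub_zero]
  rw [t1, t2]
end

section
/- Let c : {0,1}^{ℤ^d} → ℝ be a cylinder function and fix 1 ≤ j ≤ d. Suppose there exist an integer N ≥ 1, cylinder functions g_p and finitely supported functions m_p : ℤ^d → ℝ with Σ_{y∈ℤ^d} m_p(y) = 0, for 1 ≤ p ≤ N, such that c(η)(η_{e_j} − η_0) = Σ_{p=1}^N Σ_{y∈ℤ^d} m_p(y) (τ_y g_p)(η) for all η ∈ {0,1}^{ℤ^d}. Then there exist cylinder functions h_k, 1 ≤ k ≤ d, such that c(η)(η_{e_j} − η_0) = Σ_{k=1}^d { (τ_{e_k} h_k)(η) − h_k(η) } for all η ∈ {0,1}^{ℤ^d}. -/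
open Finset

section GradAux

variable {d : ℕ}

lemma zshift_zshift (a b : Fin d → ℤ) (η : ZCfg d) :
    zshift a (zshift b η) = zshift (b + a) η := by
  funext z; simp [zshift, add_assoc]

lemma zshift_zero (η : ZCfg d) : zshift (0 : Fin d → ℤ) η = η := by
  funext z; simp [zshift]

/-- The zero cylinder function. -/
def CylFun.zero (d : ℕ) : CylFun d := ⟨∅, fun _ => 0, fun _ _ _ => rfl⟩

/-- Sum of two cylinder functions. -/
def CylFun.add (f g : CylFun d) : CylFun d :=
  ⟨f.supp ∪ g.supp, fun η => f.toFun η + g.toFun η, by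
    intro η ζ h
    rw [f.cyl η ζ (fun z hz => h z (Finset.mem_union_left _ hz)),
        g.cyl η ζ (fun z hz => h z (Finset.mem_union_right _ hz))]⟩

/-- Scalar multiple of a cylinder function. -/
def CylFun.smulR (a : ℝ) (f : CylFun d) : CylFun d :=
  ⟨f.supp, fun η => a * f.toFun η, fun η ζ h => by rw [f.cyl η ζ h]⟩

/-- Translate of a cylinder function. -/
def CylFun.shift (y : Fin d → ℤ) (f : CylFun d) : CylFun d :=
  ⟨f.supp.image (y + ·), fun η => f.toFun (zshift y η), by
    intro η ζ h
    exact f.cyl _ _ fun z hz => h (y + z) (Finset.mem_image_of_mem _ hz)⟩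

/-- A function is a sum of nearest-neighbour gradients of cylinder functions. -/
def IsGrad (d : ℕ) (F : ZCfg d → ℝ) : Prop :=
  ∃ h : Fin d → CylFun d, ∀ η : ZCfg d,
    F η = ∑ k : Fin d, ((h k).toFun (zshift (unitZ d k) η) - (h k).toFun η)

lemma isGrad_congr {F G : ZCfg d → ℝ} (h : ∀ η, F η = G η) (hg : IsGrad d G) :
    IsGrad d F := by
  obtain ⟨w, hw⟩ := hg
  exact ⟨w, fun η => (h η).trans (hw η)⟩

lemma isGrad_zero : IsGrad d (fun _ => 0) :=
  ⟨fun _ => CylFun.zero d, fun η => by simp [CylFun.zero]⟩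

lemma isGrad_add {F G : ZCfg d → ℝ} (hF : IsGrad d F) (hG : IsGrad d G) :
    IsGrad d (fun η => F η + G η) := by
  obtain ⟨u, hu⟩ := hF
  obtain ⟨v, hv⟩ := hG
  refine ⟨fun k => (u k).add (v k), fun η => ?_⟩
  dsimp only
  rw [hu η, hv η, ← Finset.sum_add_distrib]
  refine Finset.sum_congr rfl fun k _ => ?_
  simp [CylFun.add]; ring

lemma isGrad_smul (a : ℝ) {F : ZCfg d → ℝ} (hF : IsGrad d F) :
    IsGrad d (fun η => a * F η) := by
  obtain ⟨u, hu⟩ := hF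
  refine ⟨fun k => (u k).smulR a, fun η => ?_⟩
  dsimp only
  rw [hu η, Finset.mul_sum]
  refine Finset.sum_congr rfl fun k _ => ?_
  simp [CylFun.smulR]; ring

lemma isGrad_sum {ι : Type*} (s : Finset ι) (f : ι → ZCfg d → ℝ)
    (h : ∀ i ∈ s, IsGrad d (f i)) :
    IsGrad d (fun η => ∑ i ∈ s, f i η) := by
  classical
  induction s using Finset.induction_on with
  | empty => exact isGrad_congr (fun η => by simp) isGrad_zero
  | @insert a s hnot ih =>
    refine isGrad_congr (G := fun η => f a η + ∑ i ∈ s, f i η)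
      (fun η => Finset.sum_insert hnot) ?_
    exact isGrad_add (h a (Finset.mem_insert_self a s))
      (ih fun i hi => h i (Finset.mem_insert_of_mem hi))

lemma isGrad_unit (g : CylFun d) (k : Fin d) (s : ℤ) (hs : s = 1 ∨ s = -1) :
    IsGrad d (fun η =>
      g.toFun (zshift (fun i => if i = k then s else 0) η) - g.toFun η) := by
  classical
  rcases hs with rfl | rfl
  · have hv : (fun i => if i = k then (1 : ℤ) else 0) = unitZ d k := rfl
    refine ⟨fun k' => if k' = k then g else CylFun.zero d, fun η => ?_⟩
    rw [Finset.sum_eq_single k]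
    · simp [hv]
    · intro b _ hb; simp [hb, CylFun.zero]
    · simp
  · set v : Fin d → ℤ := fun i => if i = k then (-1 : ℤ) else 0 with hv
    have hsum0 : unitZ d k + v = 0 := by
      funext t; by_cases ht : t = k <;> simp [unitZ, hv, ht]
    refine ⟨fun k' => if k' = k then (CylFun.shift v g).smulR (-1) else CylFun.zero d,
      fun η => ?_⟩
    rw [Finset.sum_eq_single k]
    · dsimp only
      rw [if_pos rfl]
      simp only [CylFun.smulR, CylFun.shift]
      rw [zshift_zshift, hsum0, zshift_zero]
      ring
    · intro b _ hb; simp [hb, CylFun.zero]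
    · simp

lemma isGrad_shift_sub (g : CylFun d) (y : Fin d → ℤ) :
    IsGrad d (fun η => g.toFun (zshift y η) - g.toFun η) := by
  classical
  generalize hn : (∑ i, (y i).natAbs) = n
  induction n generalizing y g with
  | zero =>
    have hy : y = 0 := by
      funext i
      have := Finset.sum_eq_zero_iff.mp hn i (Finset.mem_univ i)
      simp only [Pi.zero_apply]
      omega
    subst hy
    refine isGrad_congr (G := fun _ => 0) (fun η => ?_) isGrad_zero
    rw [zshift_zero]; ring
  | succ n ih =>
    have hex : ∃ i, y i ≠ 0 := by
      by_contra h
      push_neg at h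
      simp [h] at hn
    obtain ⟨i, hi⟩ := hex
    set s : ℤ := if 0 < y i then 1 else -1 with hsdef
    set y' : Fin d → ℤ := Function.update y i (y i - s) with hy'
    have hupd : ∀ j, (y' j).natAbs
        = Function.update (fun j => (y j).natAbs) i ((y i - s).natAbs) j := by
      intro t; by_cases ht : t = i <;> simp [hy', Function.update, ht]
    have hstep : (y i - s).natAbs + 1 = (y i).natAbs := by
      by_cases h : 0 < y i <;> simp only [hsdef, if_pos, if_neg, h, ite_true,
        ite_false] <;> omega
    have hsum : (∑ j, (y' j).natAbs) = n := by
      have h1 : (∑ j, (y' j).natAbs)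
          = ∑ j, Function.update (fun j => (y j).natAbs) i ((y i - s).natAbs) j :=
        Finset.sum_congr rfl fun t _ => hupd t
      rw [h1, Finset.sum_update_of_mem (Finset.mem_univ i)] at *
      rw [← Finset.add_sum_erase _ _ (Finset.mem_univ i), Finset.erase_eq] at hn
      omega
    have hvec : ((fun t => if t = i then s else 0) + y') = y := by
      funext t; by_cases ht : t = i <;> simp [hy', Function.update, ht]
    have h1 := isGrad_unit (CylFun.shift y' g) i s
      (by by_cases h : 0 < y i <;> simp [hsdef, h])
    have h2 := ih g y' hsum
    refine isGrad_congr (fun η => ?_) (isGrad_add h1 h2)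
    simp only [CylFun.shift, zshift_zshift, hvec]
    ring

end GradAux

/-- the usual gradient condition (mean-zero signed measures applied to
translates of cylinder functions) implies the nearest-neighbour gradient
decomposition. -/
theorem gradient_condition_from_mean_zero
    (d : ℕ) (c : CylFun d) (j : Fin d) (N : ℕ) (hN : 1 ≤ N)
    (g : Fin N → CylFun d) (m : Fin N → ((Fin d → ℤ) →₀ ℝ))
    (hm : ∀ p, ∑ y ∈ (m p).support, m p y = 0)
    (hrep : ∀ η : ZCfg d,
      c.toFun η * (zval η (unitZ d j) - zval η 0)
        = ∑ p : Fin N, ∑ y ∈ (m p).support, m p y * (g p).toFun (zshift y η)) :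
    ∃ h : Fin d → CylFun d, ∀ η : ZCfg d,
      c.toFun η * (zval η (unitZ d j) - zval η 0)
        = ∑ k : Fin d, ((h k).toFun (zshift (unitZ d k) η) - (h k).toFun η) := by
  have key : IsGrad d (fun η => c.toFun η * (zval η (unitZ d j) - zval η 0)) := by
    refine isGrad_congr (G := fun η => ∑ p : Fin N, ∑ y ∈ (m p).support,
      m p y * ((g p).toFun (zshift y η) - (g p).toFun η)) (fun η => ?_) ?_
    · rw [hrep η]
      refine Finset.sum_congr rfl fun p _ => ?_
      have : ∑ y ∈ (m p).support, m p y * ((g p).toFun (zshift y η) - (g p).toFun η)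
          = ∑ y ∈ (m p).support, m p y * (g p).toFun (zshift y η)
            - (∑ y ∈ (m p).support, m p y) * (g p).toFun η := by
        rw [Finset.sum_mul, ← Finset.sum_sub_distrib]
        exact Finset.sum_congr rfl fun y _ => by ring
      rw [this, hm p, zero_mul, sub_zero]
    · refine isGrad_sum _ _ fun p _ => isGrad_sum _ _ fun y _ => ?_
      exact isGrad_smul _ (isGrad_shift_sub (g p) y)
  exact key
end
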